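/- arXiv:2411.09987 — 4 statements merged into one kernel-verified Lean document; each statement's English description precedes it below -/
import Mathlib

section
/- Let M be the matroid on ground set {x_i : 1 ≤ i ≤ n} ∪ {x_i + x_j, x_i − x_j : 1 ≤ i < j ≤ n} ⊆ ℝ^n realized by these vectors (the B_n root system matroid), with n ≥ 3. Then b = {x_1, ..., x_n} is the unique Cremona basis of M. -/
open Set

variable {α : Type*}

/-- The set of non-basis elements on the line through `x` and `y`. -/
def Fij (M : Matroid α) (x y : α) : Set α := M.closure {x, y} \ {x, y}

/-- `b` is a Cremona basis: a base of `M` such that the sets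
`Fij = cl{bᵢ,bⱼ} \ {bᵢ,bⱼ}` are pairwise disjoint with union `M.E \ b`. -/
def IsCremonaBasis (M : Matroid α) (b : Set α) : Prop :=
  M.IsBase b ∧
  (∀ x ∈ b, ∀ y ∈ b, ∀ x' ∈ b, ∀ y' ∈ b, x ≠ y → x' ≠ y' →
    ({x, y} : Set α) ≠ {x', y'} → Disjoint (Fij M x y) (Fij M x' y')) ∧
  (⋃ x ∈ b, ⋃ y ∈ b, ⋃ _ : x ≠ y, Fij M x y) = M.E \ b

/-- The `b`-support of a set `S`. -/
def suppb (M : Matroid α) (b S : Set α) : Set α :=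
  (b ∩ S) ∪ ⋃ x ∈ b, ⋃ y ∈ b, ⋃ _ : x ≠ y, ⋃ _ : (S ∩ Fij M x y).Nonempty, ({x, y} : Set α)

/-- Adjacency in the support graph `G_b(S)`: there is an edge between `x` and `y`
for each element of `S ∩ Fij M x y`. -/
def Adjb (M : Matroid α) (b S : Set α) (x y : α) : Prop :=
  x ∈ b ∧ y ∈ b ∧ x ≠ y ∧ (S ∩ Fij M x y).Nonempty

/-- The support graph `G_b(S)` is connected. -/
def SuppConnected (M : Matroid α) (b S : Set α) : Prop :=
  ∀ x ∈ suppb M b S, ∀ y ∈ suppb M b S, Relation.ReflTransGen (Adjb M b S) x y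

/-- The vertex set of the connected component of `x` in the support graph `G_b(S)`. -/
def compOf (M : Matroid α) (b S : Set α) (x : α) : Set α :=
  {y ∈ suppb M b S | Relation.ReflTransGen (Adjb M b S) x y}

/-- A matroid is simple if every pair of (not necessarily distinct) elements
of the ground set is independent. -/
def MSimple (M : Matroid α) : Prop := ∀ e ∈ M.E, ∀ f ∈ M.E, M.Indep {e, f}

/-- A circuit: a minimal dependent set. -/
def MCircuit (M : Matroid α) (C : Set α) : Prop :=
  C ⊆ M.E ∧ ¬ M.Indep C ∧ ∀ x ∈ C, M.Indep (C \ {x})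

/-- A matroid is connected if its ground set is nonempty and every two distinct
elements lie on a common circuit. -/
def MConnected (M : Matroid α) : Prop :=
  M.E.Nonempty ∧ ∀ e ∈ M.E, ∀ f ∈ M.E, e = f ∨ ∃ C, MCircuit M C ∧ e ∈ C ∧ f ∈ C

/-- The rank of a set in a matroid: the supremum of cardinalities of independent subsets. -/
noncomputable def mRank (M : Matroid α) (X : Set α) : ℕ :=
  sSup {n | ∃ I, M.Indep I ∧ I ⊆ X ∧ I.ncard = n}

/-- The set of positive roots of type `Bₙ`: the vectors `xᵢ` and `xᵢ ± xⱼ` (`i < j`). -/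
def BnRoots (n : ℕ) : Set (Fin n → ℝ) :=
  {v | (∃ i, v = Pi.single i 1) ∨
    ∃ i j, i < j ∧ (v = Pi.single i 1 + Pi.single j 1 ∨ v = Pi.single i 1 - Pi.single j 1)}


open Set Submodule

/-- root of form `e i + c e j` -/
noncomputable def rt {n : ℕ} (i j : Fin n) (c : ℝ) : Fin n → ℝ :=
  Pi.single i 1 + c • (Pi.single j 1 : Fin n → ℝ)

variable {n : ℕ}

lemma ee_apply (i k : Fin n) : (Pi.single i 1 : Fin n → ℝ) k = if k = i then 1 else 0 := by
  simp [Pi.single_apply]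

lemma rt_apply (i j k : Fin n) (c : ℝ) (hij : i ≠ j) :
    rt i j c k = if k = i then 1 else if k = j then c else 0 := by
  simp only [rt, Pi.add_apply, Pi.smul_apply, ee_apply, smul_eq_mul]
  split_ifs with h1 h2 <;> simp_all

/-- normalized form of roots -/
lemma root_form {v : Fin n → ℝ} (hv : v ∈ BnRoots n) :
    (∃ i, v = Pi.single i 1) ∨
    ∃ i j c, i < j ∧ (c = 1 ∨ c = -1) ∧ v = rt i j c := by
  rcases hv with ⟨i, rfl⟩ | ⟨i, j, hij, h | h⟩
  · exact Or.inl ⟨i, rfl⟩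
  · exact Or.inr ⟨i, j, 1, hij, Or.inl rfl, by simpa [rt] using h⟩
  · exact Or.inr ⟨i, j, -1, hij, Or.inr rfl, by simpa [rt, sub_eq_add_neg] using h⟩

lemma rt_mem (i j : Fin n) (c : ℝ) (hij : i < j) (hc : c = 1 ∨ c = -1) :
    rt i j c ∈ BnRoots n := by
  rcases hc with rfl | rfl
  · exact Or.inr ⟨i, j, hij, Or.inl (by simp [rt])⟩
  · exact Or.inr ⟨i, j, hij, Or.inr (by simp [rt, sub_eq_add_neg])⟩

lemma ee_mem (i : Fin n) : (Pi.single i 1 : Fin n → ℝ) ∈ BnRoots n := Or.inl ⟨i, rfl⟩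
lemma root_lead {v : Fin n → ℝ} (hv : v ∈ BnRoots n) :
    ∃ p, v p = 1 ∧ ∀ k, k < p → v k = 0 := by
  rcases root_form hv with ⟨i, rfl⟩ | ⟨i, j, c, hij, hc, rfl⟩
  · exact ⟨i, by simp [ee_apply], fun k hk => by simp [ee_apply, hk.ne]⟩
  · refine ⟨i, by simp [rt_apply _ _ _ _ hij.ne], fun k hk => ?_⟩
    rw [rt_apply _ _ _ _ hij.ne, if_neg hk.ne, if_neg (hk.trans hij).ne]

lemma root_ne_zero {v : Fin n → ℝ} (hv : v ∈ BnRoots n) : v ≠ 0 := by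
  obtain ⟨p, hp, -⟩ := root_lead hv
  intro h; rw [h] at hp; simpa using hp

/-- distinct roots are non-parallel -/
lemma root_not_parallel {u v : Fin n → ℝ} (hu : u ∈ BnRoots n) (hv : v ∈ BnRoots n)
    (t : ℝ) (h : u = t • v) : u = v := by
  obtain ⟨p, hp, hp'⟩ := root_lead hu
  obtain ⟨q, hq, hq'⟩ := root_lead hv
  rcases lt_trichotomy p q with hpq | rfl | hpq
  · have : u p = t * v p := by rw [h]; simp
    rw [hp, hq' p hpq, mul_zero] at this; exact absurd this one_ne_zero
  · have : u p = t * v p := by rw [h]; simp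
    rw [hp, hq, mul_one] at this
    rw [h, ← this, one_smul]
  · have : u q = t * v q := by rw [h]; simp
    rw [hp' q hpq, hq, mul_one] at this
    have h0 : u = 0 := by rw [h, ← this, zero_smul]
    rw [h0] at hp; simpa using hp
/-- a root has support of size at most 2 -/
lemma root_supp {v : Fin n → ℝ} (hv : v ∈ BnRoots n) (p q r : Fin n)
    (hpq : p ≠ q) (hpr : p ≠ r) (hqr : q ≠ r) : v p = 0 ∨ v q = 0 ∨ v r = 0 := by
  rcases root_form hv with ⟨i, rfl⟩ | ⟨i, j, c, hij, hc, rfl⟩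
  · by_cases hp : p = i
    · right; left
      rw [ee_apply, if_neg]
      intro h; exact hpq (hp.trans h.symm)
    · left; rw [ee_apply, if_neg hp]
  · -- one of p q r avoids {i, j}
    have : (p ≠ i ∧ p ≠ j) ∨ (q ≠ i ∧ q ≠ j) ∨ (r ≠ i ∧ r ≠ j) := by
      by_contra hcon
      push_neg at hcon
      obtain ⟨h1, h2, h3⟩ := hcon
      rcases Classical.em (p = i) with hp | hp
      · rcases Classical.em (q = i) with hq | hq
        · exact hpq (hp.trans hq.symm)
        · have hqj := h2 hq
          rcases Classical.em (r = i) with hr | hr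
          · exact hpr (hp.trans hr.symm)
          · exact hqr (hqj.trans (h3 hr).symm)
      · have hpj := h1 hp
        rcases Classical.em (q = j) with hq | hq
        · exact hpq (hpj.trans hq.symm)
        · have hqi := by_contra (fun h => hq (h2 (by simpa using h)))
          rcases Classical.em (r = j) with hr | hr
          · exact hpr (hpj.trans hr.symm)
          · have hri := by_contra (fun h => hr (h3 (by simpa using h)))
            exact hqr (hqi.trans hri.symm)
    rcases this with ⟨h1, h2⟩ | ⟨h1, h2⟩ | ⟨h1, h2⟩
    · left; rw [rt_apply _ _ _ _ hij.ne, if_neg h1, if_neg h2]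
    · right; left; rw [rt_apply _ _ _ _ hij.ne, if_neg h1, if_neg h2]
    · right; right; rw [rt_apply _ _ _ _ hij.ne, if_neg h1, if_neg h2]
/-- exchange: if `v ∈ span{x,y}` and `v ∉ span{x}` then `span{x,v} = span{x,y}` -/
lemma span_exchange {V : Type*} [AddCommGroup V] [Module ℝ V] {x y v : V}
    (hv : v ∈ span ℝ ({x, y} : Set V)) (hv' : v ∉ span ℝ ({x} : Set V)) :
    span ℝ ({x, v} : Set V) = span ℝ ({x, y} : Set V) := by
  obtain ⟨a, b, hab⟩ := Submodule.mem_span_pair.mp hv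
  have hb : b ≠ 0 := by
    rintro rfl
    exact hv' (Submodule.mem_span_singleton.mpr ⟨a, by simpa using hab⟩)
  apply le_antisymm
  · apply Submodule.span_le.mpr
    rintro w (rfl | rfl)
    · exact Submodule.subset_span (Or.inl rfl)
    · exact hv
  · apply Submodule.span_le.mpr
    rintro w (rfl | rfl)
    · exact Submodule.subset_span (Or.inl rfl)
    · have : w = b⁻¹ • v - (b⁻¹ * a) • x := by
        rw [← hab]; simp [smul_smul, smul_add, inv_mul_cancel₀ hb, mul_comm]
      rw [this]
      exact sub_mem (Submodule.smul_mem _ _ (Submodule.subset_span (Or.inr rfl)))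
        (Submodule.smul_mem _ _ (Submodule.subset_span (Or.inl rfl)))

lemma span_pair_smul {V : Type*} [AddCommGroup V] [Module ℝ V] {x y : V} {c : ℝ} (hc : c ≠ 0) :
    span ℝ ({c • x, y} : Set V) = span ℝ ({x, y} : Set V) := by
  apply le_antisymm <;> apply Submodule.span_le.mpr <;> rintro w (rfl | rfl)
  · exact Submodule.smul_mem _ _ (Submodule.subset_span (Or.inl rfl))
  · exact Submodule.subset_span (Or.inr rfl)
  · have h := Submodule.smul_mem (span ℝ ({c • w, y} : Set V)) c⁻¹
      (Submodule.subset_span (Or.inl rfl))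
    simpa [smul_smul, inv_mul_cancel₀ hc] using h
  · exact Submodule.subset_span (Or.inr rfl)

/-- two distinct roots in a plane span the plane -/
lemma two_span {x y : Fin n → ℝ} {u w : Fin n → ℝ}
    (hu : u ∈ BnRoots n) (hw : w ∈ BnRoots n) (huw : u ≠ w)
    (huW : u ∈ span ℝ ({x, y} : Set (Fin n → ℝ)))
    (hwW : w ∈ span ℝ ({x, y} : Set (Fin n → ℝ))) :
    span ℝ ({u, w} : Set (Fin n → ℝ)) = span ℝ ({x, y} : Set (Fin n → ℝ)) := by
  have hwu : w ∉ span ℝ ({u} : Set (Fin n → ℝ)) := by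
    intro h
    obtain ⟨t, ht⟩ := Submodule.mem_span_singleton.mp h
    exact huw (root_not_parallel hw hu t ht.symm).symm
  by_cases hux : u ∈ span ℝ ({x} : Set (Fin n → ℝ))
  · obtain ⟨t, ht⟩ := Submodule.mem_span_singleton.mp hux
    have htne : t ≠ 0 := by rintro rfl; exact root_ne_zero hu (by simpa using ht.symm)
    have h1 : span ℝ ({u, y} : Set (Fin n → ℝ)) = span ℝ ({x, y} : Set (Fin n → ℝ)) := by
      have := span_pair_smul (x := x) (y := y) htne
      rw [ht] at this; exact this
    have hwW' : w ∈ span ℝ ({u, y} : Set (Fin n → ℝ)) := h1.symm ▸ hwW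
    rw [span_exchange hwW' hwu, h1]
  · have h1 := span_exchange huW hux
    have hwW' : w ∈ span ℝ ({x, u} : Set (Fin n → ℝ)) := h1.symm ▸ hwW
    rw [Set.pair_comm x u] at hwW' h1
    rw [span_exchange hwW' hwu, h1]
lemma conclude_pair {x y : Fin n → ℝ} {i j : Fin n} (hij : i ≠ j)
    (h : span ℝ ({Pi.single i 1, Pi.single j 1} : Set (Fin n → ℝ)) =
      span ℝ ({x, y} : Set (Fin n → ℝ))) :
    ∃ i' j', i' < j' ∧ span ℝ ({x, y} : Set (Fin n → ℝ)) =
      span ℝ ({Pi.single i' 1, Pi.single j' 1} : Set (Fin n → ℝ)) := by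
  rcases hij.lt_or_gt with h' | h'
  · exact ⟨i, j, h', h.symm⟩
  · exact ⟨j, i, h', by rw [← h, Set.pair_comm]⟩

/-- Case I of the plane classification: a standard vector lies in the plane. -/
lemma case_single {x y : Fin n → ℝ} {m : Fin n}
    (hm : (Pi.single m 1 : Fin n → ℝ) ∈ span ℝ ({x, y} : Set (Fin n → ℝ)))
    {a b c : Fin n → ℝ} (ha : a ∈ BnRoots n) (hb : b ∈ BnRoots n) (hc : c ∈ BnRoots n)
    (hab : a ≠ b) (hac : a ≠ c) (hbc : b ≠ c)
    (haW : a ∈ span ℝ ({x, y} : Set (Fin n → ℝ)))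
    (hbW : b ∈ span ℝ ({x, y} : Set (Fin n → ℝ)))
    (hcW : c ∈ span ℝ ({x, y} : Set (Fin n → ℝ))) :
    ∃ i j, i < j ∧ span ℝ ({x, y} : Set (Fin n → ℝ)) =
      span ℝ ({Pi.single i 1, Pi.single j 1} : Set (Fin n → ℝ)) := by
  have key : ∀ u w : Fin n → ℝ, u ∈ BnRoots n → w ∈ BnRoots n →
      u ∈ span ℝ ({x, y} : Set (Fin n → ℝ)) → w ∈ span ℝ ({x, y} : Set (Fin n → ℝ)) →
      u ≠ Pi.single m 1 → w ≠ Pi.single m 1 → w ≠ u →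
      ∃ i j, i < j ∧ span ℝ ({x, y} : Set (Fin n → ℝ)) =
        span ℝ ({Pi.single i 1, Pi.single j 1} : Set (Fin n → ℝ)) := by
    intro u w hu hw huW hwW hum hwm hwu
    rcases root_form hu with ⟨p, rfl⟩ | ⟨p, q, d, hpq, hd, rfl⟩
    · have hmp : m ≠ p := fun h => hum (by rw [h])
      exact conclude_pair hmp (two_span (ee_mem m) (ee_mem p) (fun h => hum h.symm) hm huW)
    · have hd0 : d ≠ 0 := by rcases hd with rfl | rfl <;> norm_num
      by_cases hmp : m = p
      · subst hmp
        have hq : (Pi.single q 1 : Fin n → ℝ) ∈ span ℝ ({x, y} : Set (Fin n → ℝ)) := by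
          have h2 := Submodule.smul_mem (span ℝ ({x, y} : Set (Fin n → ℝ))) d⁻¹
            (sub_mem huW hm)
          have h3 : d⁻¹ • (rt m q d - Pi.single m 1) = (Pi.single q 1 : Fin n → ℝ) := by
            simp [rt, smul_smul, inv_mul_cancel₀ hd0]
          rwa [h3] at h2
        have hmq : m ≠ q := hpq.ne
        exact conclude_pair hmq (two_span (ee_mem m) (ee_mem q)
          (fun h => hmq (by
            have := congrFun h q; simp [ee_apply, hmq] at this)) hm hq)
      · by_cases hmq : m = q
        · subst hmq
          have hp : (Pi.single p 1 : Fin n → ℝ) ∈ span ℝ ({x, y} : Set (Fin n → ℝ)) := by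
            have h2 := sub_mem huW (Submodule.smul_mem _ d hm)
            have h3 : rt p m d - d • (Pi.single m 1 : Fin n → ℝ) = Pi.single p 1 := by
              simp [rt]
            rwa [h3] at h2
          have hpm : p ≠ m := hpq.ne
          exact conclude_pair hpm (two_span (ee_mem p) (ee_mem m)
            (fun h => hpm (by
              have := congrFun h p; simp [ee_apply, hpm] at this)) hp hm)
        · exfalso
          have hW : span ℝ ({Pi.single m 1, rt p q d} : Set (Fin n → ℝ)) =
              span ℝ ({x, y} : Set (Fin n → ℝ)) :=
            two_span (ee_mem m) hu (fun h => hum h.symm) hm huW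
          obtain ⟨α, β, hαβ⟩ := Submodule.mem_span_pair.mp (hW ▸ hwW)
          have hwm' : w m = α := by
            rw [← hαβ]; simp [ee_apply, rt_apply _ _ _ _ hpq.ne, hmp, hmq]
          have hwp : w p = β := by
            rw [← hαβ]
            simp [ee_apply, rt_apply _ _ _ _ hpq.ne, Ne.symm hmp]
          have hwq : w q = β * d := by
            rw [← hαβ]
            simp [ee_apply, rt_apply _ _ _ _ hpq.ne, Ne.symm hmq, hpq.ne']
          rcases root_supp hw m p q hmp hmq hpq.ne with h0 | h0 | h0
          · have hα : α = 0 := by rw [← hwm', h0]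
            rw [hα, zero_smul, zero_add] at hαβ
            exact hwu (root_not_parallel hw hu β hαβ.symm)
          · have hβ : β = 0 := by rw [← hwp, h0]
            rw [hβ, zero_smul, add_zero] at hαβ
            exact hwm (root_not_parallel hw (ee_mem m) α hαβ.symm)
          · have hβ : β = 0 := by
              have := h0; rw [hwq] at this
              exact (mul_eq_zero.mp this).resolve_right hd0
            rw [hβ, zero_smul, add_zero] at hαβ
            exact hwm (root_not_parallel hw (ee_mem m) α hαβ.symm)
  by_cases ham : a = Pi.single m 1
  · subst ham
    exact key b c hb hc hbW hcW (Ne.symm hab) (Ne.symm hac) (Ne.symm hbc)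
  · by_cases hbm : b = Pi.single m 1
    · subst hbm
      exact key a c ha hc haW hcW ham (Ne.symm hbc) (Ne.symm hac)
    · exact key a b ha hb haW hbW ham hbm (Ne.symm hab)
/-- Main plane classification: four distinct roots in a plane force a coordinate plane. -/
lemma plane4 {x y w1 w2 : Fin n → ℝ}
    (hx : x ∈ BnRoots n) (hy : y ∈ BnRoots n) (hw1 : w1 ∈ BnRoots n) (hw2 : w2 ∈ BnRoots n)
    (hxy : x ≠ y) (hxw1 : x ≠ w1) (hxw2 : x ≠ w2) (hyw1 : y ≠ w1) (hyw2 : y ≠ w2)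
    (hw12 : w1 ≠ w2)
    (h1 : w1 ∈ span ℝ ({x, y} : Set (Fin n → ℝ)))
    (h2 : w2 ∈ span ℝ ({x, y} : Set (Fin n → ℝ))) :
    ∃ i j, i < j ∧ span ℝ ({x, y} : Set (Fin n → ℝ)) =
      span ℝ ({Pi.single i 1, Pi.single j 1} : Set (Fin n → ℝ)) := by
  have hxW : x ∈ span ℝ ({x, y} : Set (Fin n → ℝ)) := Submodule.subset_span (Or.inl rfl)
  have hyW : y ∈ span ℝ ({x, y} : Set (Fin n → ℝ)) := Submodule.subset_span (Or.inr rfl)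
  rcases root_form hx with ⟨m, rfl⟩ | ⟨p, q, c, hpq, hc, rfl⟩
  · exact case_single hxW hy hw1 hw2 hyw1 hyw2 hw12 hyW h1 h2
  · rcases root_form hy with ⟨m, rfl⟩ | ⟨r, s, d, hrs, hd, rfl⟩
    · exact case_single hyW (rt_mem p q c hpq hc) hw1 hw2 hxw1 hxw2 hw12 hxW h1 h2
    · have hc0 : c ≠ 0 := by rcases hc with rfl | rfl <;> norm_num
      have hd0 : d ≠ 0 := by rcases hd with rfl | rfl <;> norm_num
      by_cases hsame : p = r ∧ q = s
      · -- same index pair: single p 1 lies in the plane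
        obtain ⟨rfl, rfl⟩ := hsame
        have hcd : c ≠ d := by
          intro h; exact hxy (by rw [h])
        have hcd0 : c + d = 0 := by
          rcases hc with rfl | rfl <;> rcases hd with rfl | rfl <;> simp_all <;> norm_num
        have hm : (Pi.single p 1 : Fin n → ℝ) ∈ span ℝ
            ({rt p q c, rt p q d} : Set (Fin n → ℝ)) := by
          have h3 := Submodule.smul_mem (span ℝ ({rt p q c, rt p q d} : Set (Fin n → ℝ)))
            (2⁻¹ : ℝ) (add_mem hxW hyW)
          have h4 : (2⁻¹ : ℝ) • (rt p q c + rt p q d) = (Pi.single p 1 : Fin n → ℝ) := by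
            funext k
            simp only [Pi.smul_apply, Pi.add_apply, rt_apply _ _ _ _ hpq.ne, ee_apply,
              smul_eq_mul]
            split_ifs <;> ring_nf <;> simp_all <;> linarith
          rwa [h4] at h3
        exact case_single hm (rt_mem p q c hpq hc) hw1 hw2 hxw1 hxw2 hw12 hxW h1 h2
      · exfalso
        -- shared index case: derive contradiction
        have shared : ∀ (m u1 u2 : Fin n) (γ1 δ1 γ2 δ2 : ℝ), γ1 ≠ 0 → δ1 ≠ 0 → γ2 ≠ 0 →
            δ2 ≠ 0 → m ≠ u1 → m ≠ u2 → u1 ≠ u2 →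
            rt p q c = γ1 • (Pi.single m 1 : Fin n → ℝ) + δ1 • (Pi.single u1 1 : Fin n → ℝ) →
            rt r s d = γ2 • (Pi.single m 1 : Fin n → ℝ) + δ2 • (Pi.single u2 1 : Fin n → ℝ) → False := by
          intro m u1 u2 γ1 δ1 γ2 δ2 hγ1 hδ1 hγ2 hδ2 hmu1 hmu2 hu12 hxe hye
          have main : ∀ w : Fin n → ℝ, w ∈ BnRoots n →
              w ∈ span ℝ ({rt p q c, rt r s d} : Set (Fin n → ℝ)) →
              w ≠ rt p q c → w ≠ rt r s d →
              ∃ α : ℝ, α ≠ 0 ∧ w = α • (rt p q c - (γ1 / γ2) • rt r s d) := by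
            intro w hw hwW hwx hwy
            obtain ⟨α, β, hαβ⟩ := Submodule.mem_span_pair.mp hwW
            rw [hxe, hye] at hαβ
            have hwu1 : w u1 = α * δ1 := by
              rw [← hαβ]
              simp [ee_apply, Ne.symm hmu1, hu12]
            have hwu2 : w u2 = β * δ2 := by
              rw [← hαβ]; simp [ee_apply, Ne.symm hmu2, hu12]
            have hwm : w m = α * γ1 + β * γ2 := by
              rw [← hαβ]; simp [ee_apply, hmu1, hmu2]
            have hαβ' : α • rt p q c + β • rt r s d = w := by rw [hxe, hye]; exact hαβ
            rcases root_supp hw u1 u2 m hu12 (Ne.symm hmu1) (Ne.symm hmu2) with h0 | h0 | h0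
            · have hα : α = 0 := by
                have := h0; rw [hwu1] at this
                exact (mul_eq_zero.mp this).resolve_right hδ1
              rw [hα, zero_smul, zero_add] at hαβ'
              exact absurd (root_not_parallel hw (rt_mem r s d hrs hd) β hαβ'.symm) hwy
            · have hβ : β = 0 := by
                have := h0; rw [hwu2] at this
                exact (mul_eq_zero.mp this).resolve_right hδ2
              rw [hβ, zero_smul, add_zero] at hαβ'
              exact absurd (root_not_parallel hw (rt_mem p q c hpq hc) α hαβ'.symm) hwx
            · have hαγ : α * γ1 + β * γ2 = 0 := by rw [← hwm, h0]
              have hα : α ≠ 0 := by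
                rintro rfl
                have hβ : β = 0 := by
                  simp only [zero_mul, zero_add] at hαγ
                  exact (mul_eq_zero.mp hαγ).resolve_right hγ2
                rw [zero_smul, hβ, zero_smul, add_zero] at hαβ'
                exact root_ne_zero hw hαβ'.symm
              refine ⟨α, hα, ?_⟩
              have hβval : β = -(α * γ1 / γ2) := by field_simp; linarith
              rw [← hαβ', hβval]
              module
          obtain ⟨α, hα, hw1e⟩ := main w1 hw1 h1 (Ne.symm hxw1) (Ne.symm hyw1)
          obtain ⟨α', hα', hw2e⟩ := main w2 hw2 h2 (Ne.symm hxw2) (Ne.symm hyw2)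
          have : w2 = (α' * α⁻¹) • w1 := by
            rw [hw1e, hw2e, smul_smul, mul_assoc, inv_mul_cancel₀ hα, mul_one]
          exact hw12 (root_not_parallel hw2 hw1 _ this).symm
        by_cases hpr : p = r
        · subst hpr
          have hqs : q ≠ s := fun h => hsame ⟨rfl, h⟩
          exact shared p q s 1 c 1 d one_ne_zero hc0 one_ne_zero hd0 hpq.ne hrs.ne hqs
            (by rw [rt, one_smul]) (by rw [rt, one_smul])
        · by_cases hqs : q = s
          · subst hqs
            exact shared q p r c 1 d 1 hc0 one_ne_zero hd0 one_ne_zero hpq.ne' hrs.ne' hpr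
              (by rw [rt, one_smul, add_comm]) (by rw [rt, one_smul, add_comm])
          · by_cases hqr : q = r
            · subst hqr
              exact shared q p s c 1 1 d hc0 one_ne_zero one_ne_zero hd0 hpq.ne' hrs.ne
                (hpq.trans hrs).ne
                (by rw [rt, one_smul, add_comm]) (by rw [rt, one_smul])
            · by_cases hps : p = s
              · subst hps
                exact shared p q r 1 c d 1 one_ne_zero hc0 hd0 one_ne_zero hpq.ne hrs.ne'
                  (hrs.trans hpq).ne'
                  (by rw [rt, one_smul]) (by rw [rt, one_smul, add_comm])
              · -- disjoint supports
                obtain ⟨α, β, hαβ⟩ := Submodule.mem_span_pair.mp h1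
                have hp1 : w1 p = α := by
                  rw [← hαβ]
                  simp [rt_apply _ _ _ _ hpq.ne, rt_apply _ _ _ _ hrs.ne, hpr, hps]
                have hq1 : w1 q = α * c := by
                  rw [← hαβ]
                  simp [rt_apply _ _ _ _ hpq.ne, rt_apply _ _ _ _ hrs.ne, hpq.ne', hqr, hqs]
                have hr1 : w1 r = β := by
                  rw [← hαβ]
                  simp [rt_apply _ _ _ _ hpq.ne, rt_apply _ _ _ _ hrs.ne, Ne.symm hpr,
                    Ne.symm hqr]
                rcases root_supp hw1 p q r hpq.ne hpr hqr with h0 | h0 | h0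
                · have hα : α = 0 := by rw [← hp1, h0]
                  rw [hα, zero_smul, zero_add] at hαβ
                  exact hyw1 (root_not_parallel hw1 (rt_mem r s d hrs hd) β hαβ.symm).symm
                · have hα : α = 0 := by
                    have := h0; rw [hq1] at this
                    exact (mul_eq_zero.mp this).resolve_right hc0
                  rw [hα, zero_smul, zero_add] at hαβ
                  exact hyw1 (root_not_parallel hw1 (rt_mem r s d hrs hd) β hαβ.symm).symm
                · have hβ : β = 0 := by rw [← hr1, h0]
                  rw [hβ, zero_smul, add_zero] at hαβ
                  exact hxw1 (root_not_parallel hw1 (rt_mem p q c hpq hc) α hαβ.symm).symm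
lemma mem_span_ee {i j : Fin n} (hij : i ≠ j) (v : Fin n → ℝ) :
    v ∈ span ℝ ({Pi.single i 1, Pi.single j 1} : Set (Fin n → ℝ)) ↔
      ∀ k, k ≠ i → k ≠ j → v k = 0 := by
  constructor
  · intro hv k hki hkj
    obtain ⟨a, b, hab⟩ := Submodule.mem_span_pair.mp hv
    rw [← hab]
    simp [ee_apply, hki, hkj]
  · intro hv
    refine Submodule.mem_span_pair.mpr ⟨v i, v j, funext fun k => ?_⟩
    by_cases hki : k = i
    · subst hki; simp [ee_apply, hij, Ne.symm hij]
    · by_cases hkj : k = j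
      · subst hkj; simp [ee_apply, hij, Ne.symm hij, hki]
      · simp [ee_apply, hki, hkj, hv k hki hkj]

/-- the four roots of the coordinate plane `span{e i, e j}` -/
def R4 {n : ℕ} (i j : Fin n) : Set (Fin n → ℝ) :=
  {Pi.single i 1, Pi.single j 1, rt i j 1, rt i j (-1)}

lemma ee_ne_ee {i j : Fin n} (hij : i ≠ j) :
    (Pi.single i 1 : Fin n → ℝ) ≠ Pi.single j 1 := by
  intro h
  have := congrFun h i
  simp [ee_apply, hij] at this

lemma ee_ne_rt {m p q : Fin n} {c : ℝ} (hpq : p ≠ q) (hc : c ≠ 0) :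
    (Pi.single m 1 : Fin n → ℝ) ≠ rt p q c := by
  intro h
  by_cases hmq : m = q
  · have := congrFun h p
    rw [ee_apply, rt_apply _ _ _ _ hpq] at this
    simp [show p ≠ m from fun h' => hpq (h'.trans hmq)] at this
  · have := congrFun h q
    rw [ee_apply, rt_apply _ _ _ _ hpq] at this
    simp [show q ≠ m from fun h' => hmq h'.symm, Ne.symm hpq] at this
    exact hc this.symm

lemma rt_inj {p q r s : Fin n} {c d : ℝ} (hpq : p < q) (hrs : r < s)
    (hc : c ≠ 0) (hd : d ≠ 0) (h : rt p q c = rt r s d) : p = r ∧ q = s ∧ c = d := by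
  have hpr : p = r := by
    by_contra hne
    have h1 := congrFun h p
    have h2 := congrFun h r
    rw [rt_apply _ _ _ _ hpq.ne, rt_apply _ _ _ _ hrs.ne] at h1 h2
    rw [if_pos rfl, if_neg hne] at h1
    rw [if_neg (fun h' : r = p => hne h'.symm), if_pos rfl] at h2
    by_cases hps : p = s
    · rw [if_pos hps] at h1
      by_cases hrq : r = q
      · exact absurd (hrq ▸ ((hps ▸ hrs).trans hpq)) (lt_irrefl _)
      · rw [if_neg hrq] at h2; exact one_ne_zero h2.symm
    · rw [if_neg hps] at h1; exact one_ne_zero h1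
  subst hpr
  have hqs : q = s := by
    by_contra hne
    have h1 := congrFun h q
    rw [rt_apply _ _ _ _ hpq.ne, rt_apply _ _ _ _ hrs.ne, if_neg hpq.ne', if_pos rfl,
      if_neg hpq.ne', if_neg hne] at h1
    exact hc h1
  subst hqs
  refine ⟨rfl, rfl, ?_⟩
  have h1 := congrFun h q
  rw [rt_apply _ _ _ _ hpq.ne, rt_apply _ _ _ _ hpq.ne, if_neg hpq.ne', if_pos rfl,
    if_neg hpq.ne', if_pos rfl] at h1
  exact h1

lemma R4_subset {i j : Fin n} (hij : i < j) :
    R4 i j ⊆ {v | v ∈ BnRoots n ∧ v ∈ span ℝ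
      ({Pi.single i 1, Pi.single j 1} : Set (Fin n → ℝ))} := by
  have hspan : ∀ c : ℝ, rt i j c ∈ span ℝ
      ({Pi.single i 1, Pi.single j 1} : Set (Fin n → ℝ)) := by
    intro c
    exact add_mem (Submodule.subset_span (Or.inl rfl))
      (Submodule.smul_mem _ _ (Submodule.subset_span (Or.inr rfl)))
  rintro v (rfl | rfl | rfl | rfl)
  · exact ⟨ee_mem i, Submodule.subset_span (Or.inl rfl)⟩
  · exact ⟨ee_mem j, Submodule.subset_span (Or.inr rfl)⟩
  · exact ⟨rt_mem i j 1 hij (Or.inl rfl), hspan 1⟩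
  · exact ⟨rt_mem i j (-1) hij (Or.inr rfl), hspan (-1)⟩

lemma plane_roots {i j : Fin n} (hij : i < j) :
    {v | v ∈ BnRoots n ∧ v ∈ span ℝ
      ({Pi.single i 1, Pi.single j 1} : Set (Fin n → ℝ))} = R4 i j := by
  apply Subset.antisymm _ (R4_subset hij)
  rintro v ⟨hv, hvs⟩
  rw [mem_span_ee hij.ne] at hvs
  rcases root_form hv with ⟨m, rfl⟩ | ⟨p, q, c, hpq, hcc, rfl⟩
  · by_cases hmi : m = i
    · exact Or.inl (by rw [hmi])
    · by_cases hmj : m = j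
      · exact Or.inr (Or.inl (by rw [hmj]))
      · exfalso
        have := hvs m hmi hmj
        simp [ee_apply] at this
  · have hc0 : c ≠ 0 := by rcases hcc with rfl | rfl <;> norm_num
    have hpi : p = i := by
      by_contra hne
      by_cases hpj : p = j
      · -- p = j, then q > j; value at q nonzero
        have hq : q ≠ i := fun h => absurd ((h ▸ (hpj ▸ hpq : j < q)).trans hij) (lt_irrefl _)
        have hq2 : q ≠ j := (hpj ▸ hpq : j < q).ne'
        have := hvs q hq hq2
        rw [rt_apply _ _ _ _ hpq.ne, if_neg hpq.ne', if_pos rfl] at this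
        exact hc0 this
      · have := hvs p hne hpj
        rw [rt_apply _ _ _ _ hpq.ne, if_pos rfl] at this
        exact one_ne_zero this
    subst hpi
    have hqj : q = j := by
      by_contra hne
      have := hvs q hpq.ne' hne
      rw [rt_apply _ _ _ _ hpq.ne, if_neg hpq.ne', if_pos rfl] at this
      exact hc0 this
    subst hqj
    rcases hcc with rfl | rfl
    · exact Or.inr (Or.inr (Or.inl rfl))
    · exact Or.inr (Or.inr (Or.inr rfl))
lemma root_pair_indep {x y : Fin n → ℝ} (hx : x ∈ BnRoots n) (hy : y ∈ BnRoots n)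
    (hxy : x ≠ y) :
    LinearIndependent ℝ (fun v : ({x, y} : Set (Fin n → ℝ)) => (v : Fin n → ℝ)) := by
  have hxny : x ∉ ({y} : Set (Fin n → ℝ)) := by simpa using hxy
  change LinearIndepOn ℝ id (insert x {y})
  rw [linearIndepOn_id_insert hxny]
  refine ⟨(linearIndepOn_singleton_iff ℝ).mpr (root_ne_zero hy), fun hmem => ?_⟩
  obtain ⟨t, ht⟩ := Submodule.mem_span_singleton.mp hmem
  exact hxy (root_not_parallel hx hy t ht.symm)

section MatroidLayer

variable (M : Matroid (Fin n → ℝ))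
  (hE : M.E = BnRoots n)
  (hind : ∀ I, M.Indep I ↔ I ⊆ BnRoots n ∧
    LinearIndependent ℝ (fun v : I => (v : Fin n → ℝ)))

include hE hind

lemma closure_pair {x y : Fin n → ℝ} (hx : x ∈ BnRoots n) (hy : y ∈ BnRoots n)
    (hxy : x ≠ y) :
    M.closure {x, y} = {v | v ∈ BnRoots n ∧
      v ∈ span ℝ ({x, y} : Set (Fin n → ℝ))} := by
  have hpair : M.Indep {x, y} := (hind _).mpr ⟨by
    rintro v (rfl | rfl); exact hx; exact hy, root_pair_indep hx hy hxy⟩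
  ext v
  rw [hpair.mem_closure_iff]
  constructor
  · rintro (hdep | hv)
    · have hvE : v ∈ BnRoots n := hE ▸ hdep.subset_ground (mem_insert _ _)
      refine ⟨hvE, ?_⟩
      by_cases hvxy : v ∈ ({x, y} : Set (Fin n → ℝ))
      · exact Submodule.subset_span hvxy
      · by_contra hvs
        apply hdep.not_indep
        refine (hind _).mpr ⟨?_, ?_⟩
        · rintro w (rfl | rfl | rfl); exact hvE; exact hx; exact hy
        · exact (linearIndepOn_id_insert hvxy).mpr ⟨root_pair_indep hx hy hxy, hvs⟩
    · rcases hv with rfl | rfl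
      · exact ⟨hx, Submodule.subset_span (Or.inl rfl)⟩
      · exact ⟨hy, Submodule.subset_span (Or.inr rfl)⟩
  · rintro ⟨hvE, hvs⟩
    by_cases hvxy : v ∈ ({x, y} : Set (Fin n → ℝ))
    · exact Or.inr hvxy
    · left
      rw [Matroid.dep_iff]
      constructor
      · intro hI
        have := (hind _).mp hI
        exact ((linearIndepOn_id_insert hvxy).mp this.2).2 hvs
      · rw [hE]
        rintro w (rfl | rfl | rfl); exact hvE; exact hx; exact hy

lemma Fij_formula {x y : Fin n → ℝ} (hx : x ∈ BnRoots n) (hy : y ∈ BnRoots n)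
    (hxy : x ≠ y) :
    Fij M x y = {v | v ∈ BnRoots n ∧
      v ∈ span ℝ ({x, y} : Set (Fin n → ℝ))} \ {x, y} := by
  rw [Fij, closure_pair M hE hind hx hy hxy]

lemma Fij_ee {i j : Fin n} (hij : i < j) :
    Fij M (Pi.single i 1) (Pi.single j 1) = {rt i j 1, rt i j (-1)} := by
  rw [Fij_formula M hE hind (ee_mem i) (ee_mem j) (ee_ne_ee hij.ne), plane_roots hij]
  ext v
  simp only [R4, mem_diff, mem_insert_iff, mem_singleton_iff]
  constructor
  · rintro ⟨rfl | rfl | rfl | rfl, hne⟩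
    · exact absurd (Or.inl rfl) hne
    · exact absurd (Or.inr rfl) hne
    · exact Or.inl rfl
    · exact Or.inr rfl
  · rintro (rfl | rfl)
    · exact ⟨Or.inr (Or.inr (Or.inl rfl)), by
        rintro (h | h) <;> exact ee_ne_rt hij.ne one_ne_zero h.symm⟩
    · exact ⟨Or.inr (Or.inr (Or.inr rfl)), by
        rintro (h | h) <;> exact ee_ne_rt hij.ne (by norm_num : (-1:ℝ) ≠ 0) h.symm⟩

end MatroidLayer
section Base

variable (M : Matroid (Fin n → ℝ))
  (hE : M.E = BnRoots n)
  (hind : ∀ I, M.Indep I ↔ I ⊆ BnRoots n ∧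
    LinearIndependent ℝ (fun v : I => (v : Fin n → ℝ)))

include hE hind

lemma b0_base : M.IsBase {v : Fin n → ℝ | ∃ i : Fin n, v = Pi.single i 1} := by
  have hrange : {v : Fin n → ℝ | ∃ i : Fin n, v = Pi.single i 1} =
      Set.range (fun i : Fin n => (Pi.single i 1 : Fin n → ℝ)) := by
    ext v; simp [eq_comm]
  have hbasis : (fun i : Fin n => (Pi.single i 1 : Fin n → ℝ)) = ⇑(Pi.basisFun ℝ (Fin n)) := by
    funext i; rw [Pi.basisFun_apply]
  have hli : LinearIndependent ℝ (fun i : Fin n => (Pi.single i 1 : Fin n → ℝ)) := by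
    rw [hbasis]; exact (Pi.basisFun ℝ (Fin n)).linearIndependent
  have hspan : span ℝ {v : Fin n → ℝ | ∃ i : Fin n, v = Pi.single i 1} = ⊤ := by
    rw [hrange, hbasis]; exact (Pi.basisFun ℝ (Fin n)).span_eq
  have hindep : M.Indep {v : Fin n → ℝ | ∃ i : Fin n, v = Pi.single i 1} := by
    refine (hind _).mpr ⟨?_, ?_⟩
    · rintro v ⟨i, rfl⟩; exact ee_mem i
    · rw [hrange]
      exact (linearIndepOn_id_range_iff hli.injective).mpr hli
  refine hindep.isBase_of_forall_insert ?_
  rintro v ⟨hvE, hvb⟩ hins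
  have := (hind _).mp hins
  exact ((linearIndepOn_id_insert hvb).mp this.2).2 (by rw [hspan]; trivial)

end Base
lemma Fij_comm {α : Type*} (M : Matroid α) (x y : α) : Fij M x y = Fij M y x := by
  simp only [Fij, Set.pair_comm x y]

section Forward

variable (M : Matroid (Fin n → ℝ))
  (hE : M.E = BnRoots n)
  (hind : ∀ I, M.Indep I ↔ I ⊆ BnRoots n ∧
    LinearIndependent ℝ (fun v : I => (v : Fin n → ℝ)))

include hE hind

lemma Fij_ee_unord {i j : Fin n} (hij : i ≠ j) :
    ∃ p q, p < q ∧
      ({Pi.single i 1, Pi.single j 1} : Set (Fin n → ℝ)) = {Pi.single p 1, Pi.single q 1} ∧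
      Fij M (Pi.single i 1) (Pi.single j 1) = {rt p q 1, rt p q (-1)} := by
  rcases hij.lt_or_gt with h | h
  · exact ⟨i, j, h, rfl, Fij_ee M hE hind h⟩
  · exact ⟨j, i, h, Set.pair_comm _ _, by
      rw [Fij_comm]; exact Fij_ee M hE hind h⟩

lemma b0_cremona : IsCremonaBasis M {v : Fin n → ℝ | ∃ i : Fin n, v = Pi.single i 1} := by
  refine ⟨b0_base M hE hind, ?_, ?_⟩
  · rintro x ⟨i, rfl⟩ y ⟨j, rfl⟩ x' ⟨k, rfl⟩ y' ⟨l, rfl⟩ hxy hx'y' hne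
    have hij : i ≠ j := fun h => hxy (by rw [h])
    have hkl : k ≠ l := fun h => hx'y' (by rw [h])
    obtain ⟨p, q, hpq, hset1, hF1⟩ := Fij_ee_unord M hE hind hij
    obtain ⟨r, s, hrs, hset2, hF2⟩ := Fij_ee_unord M hE hind hkl
    rw [hF1, hF2]
    have hne' : ¬(p = r ∧ q = s) := by
      rintro ⟨rfl, rfl⟩
      exact hne (hset1.trans hset2.symm)
    rw [Set.disjoint_left]
    rintro v (rfl | rfl) (h | h) <;>
      exact hne' ⟨(rt_inj hpq hrs (by norm_num) (by norm_num) h).1,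
        (rt_inj hpq hrs (by norm_num) (by norm_num) h).2.1⟩
  · ext v
    simp only [mem_iUnion, mem_diff, mem_setOf_eq]
    constructor
    · rintro ⟨x, ⟨i, rfl⟩, y, ⟨j, rfl⟩, hxy, hv⟩
      have hij : i ≠ j := fun h => hxy (by rw [h])
      obtain ⟨p, q, hpq, -, hF⟩ := Fij_ee_unord M hE hind hij
      rw [hF] at hv
      have hvE : v ∈ BnRoots n := by
        rcases hv with rfl | rfl
        · exact rt_mem p q 1 hpq (Or.inl rfl)
        · exact rt_mem p q (-1) hpq (Or.inr rfl)
      refine ⟨hE ▸ hvE, ?_⟩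
      rintro ⟨m, rfl⟩
      rcases hv with h | h
      · exact ee_ne_rt hpq.ne one_ne_zero h
      · exact ee_ne_rt hpq.ne (by norm_num : (-1:ℝ) ≠ 0) h
    · rintro ⟨hvE, hvb⟩
      rw [hE] at hvE
      rcases root_form hvE with ⟨m, rfl⟩ | ⟨i, j, c, hij, hc, rfl⟩
      · exact absurd ⟨m, rfl⟩ hvb
      · refine ⟨Pi.single i 1, ⟨i, rfl⟩, Pi.single j 1, ⟨j, rfl⟩, ee_ne_ee hij.ne, ?_⟩
        rw [Fij_ee M hE hind hij]
        rcases hc with rfl | rfl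
        · exact Or.inl rfl
        · exact Or.inr rfl

end Forward
lemma rt_ne_rt_sign {i j : Fin n} (hij : i < j) : rt i j 1 ≠ rt i j (-1) := by
  intro h
  have := (rt_inj hij hij one_ne_zero (by norm_num) h).2.2
  norm_num at this

lemma R4_encard {i j : Fin n} (hij : i < j) : (R4 i j).encard = 4 := by
  have h1 : (Pi.single i 1 : Fin n → ℝ) ∉
      ({Pi.single j 1, rt i j 1, rt i j (-1)} : Set (Fin n → ℝ)) := by
    rintro (h | h | h)
    · exact ee_ne_ee hij.ne h
    · exact ee_ne_rt hij.ne one_ne_zero h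
    · exact ee_ne_rt hij.ne (by norm_num) h
  have h2 : (Pi.single j 1 : Fin n → ℝ) ∉ ({rt i j 1, rt i j (-1)} : Set (Fin n → ℝ)) := by
    rintro (h | h)
    · exact ee_ne_rt hij.ne one_ne_zero h
    · exact ee_ne_rt hij.ne (by norm_num) h
  have h3 : rt i j 1 ∉ ({rt i j (-1)} : Set (Fin n → ℝ)) := by
    rintro h
    exact rt_ne_rt_sign hij h
  rw [R4, Set.encard_insert_of_notMem h1, Set.encard_insert_of_notMem h2,
    Set.encard_insert_of_notMem h3, Set.encard_singleton]
  rfl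

lemma ENat.four_sub_two : ∀ a : ℕ∞, a + 2 = 4 → a = 2 := by
  intro a ha
  have h2 : (2 : ℕ∞) ≠ ⊤ := by decide
  have : a + 2 = 2 + 2 := by rw [ha]; rfl
  exact WithTop.add_right_cancel h2 this

section Structure

variable (M : Matroid (Fin n → ℝ))
  (hE : M.E = BnRoots n)
  (hind : ∀ I, M.Indep I ↔ I ⊆ BnRoots n ∧
    LinearIndependent ℝ (fun v : I => (v : Fin n → ℝ)))

include hE hind

lemma Fij_structure {x y w1 w2 : Fin n → ℝ} (hx : x ∈ BnRoots n) (hy : y ∈ BnRoots n)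
    (hxy : x ≠ y) (hw1 : w1 ∈ Fij M x y) (hw2 : w2 ∈ Fij M x y) (h12 : w1 ≠ w2) :
    ∃ i j, i < j ∧ x ∈ R4 i j ∧ y ∈ R4 i j ∧
      span ℝ ({x, y} : Set (Fin n → ℝ)) =
        span ℝ ({Pi.single i 1, Pi.single j 1} : Set (Fin n → ℝ)) ∧
      Fij M x y = R4 i j \ {x, y} := by
  rw [Fij_formula M hE hind hx hy hxy] at hw1 hw2
  obtain ⟨⟨hw1E, hw1s⟩, hw1xy⟩ := hw1
  obtain ⟨⟨hw2E, hw2s⟩, hw2xy⟩ := hw2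
  simp only [mem_insert_iff, mem_singleton_iff, not_or] at hw1xy hw2xy
  obtain ⟨i, j, hij, hspan⟩ := plane4 hx hy hw1E hw2E hxy
    (fun h => hw1xy.1 h.symm) (fun h => hw2xy.1 h.symm)
    (fun h => hw1xy.2 h.symm) (fun h => hw2xy.2 h.symm) h12 hw1s hw2s
  have hS : {v | v ∈ BnRoots n ∧ v ∈ span ℝ ({x, y} : Set (Fin n → ℝ))} = R4 i j := by
    rw [← plane_roots hij]
    ext v
    simp only [mem_setOf_eq, hspan]
  refine ⟨i, j, hij, ?_, ?_, hspan, ?_⟩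
  · rw [← hS]; exact ⟨hx, Submodule.subset_span (Or.inl rfl)⟩
  · rw [← hS]; exact ⟨hy, Submodule.subset_span (Or.inr rfl)⟩
  · rw [Fij_formula M hE hind hx hy hxy, hS]

lemma Fij_encard_le {x y : Fin n → ℝ} (hx : x ∈ BnRoots n) (hy : y ∈ BnRoots n)
    (hxy : x ≠ y) : (Fij M x y).encard ≤ 2 := by
  by_cases hss : ∃ w1 ∈ Fij M x y, ∃ w2 ∈ Fij M x y, w1 ≠ w2
  · obtain ⟨w1, hw1, w2, hw2, h12⟩ := hss
    obtain ⟨i, j, hij, hxR, hyR, -, hFeq⟩ :=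
      Fij_structure M hE hind hx hy hxy hw1 hw2 h12
    rw [hFeq]
    have hsub : ({x, y} : Set (Fin n → ℝ)) ⊆ R4 i j := by
      rintro v (rfl | rfl); exact hxR; exact hyR
    have := Set.encard_diff_add_encard_of_subset hsub
    rw [R4_encard hij, Set.encard_pair hxy] at this
    exact le_of_eq (ENat.four_sub_two _ this)
  · push_neg at hss
    exact le_trans (Set.encard_le_one_iff.mpr fun a b ha hb =>
      by_contra fun hne => hne (hss a ha b hb)) (by norm_num)

end Structure

lemma ee_injective : Function.Injective (fun i : Fin n => (Pi.single i 1 : Fin n → ℝ)) := by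
  intro i j h
  by_contra hne
  exact ee_ne_ee hne h

lemma b0_encard : ({v : Fin n → ℝ | ∃ i : Fin n, v = Pi.single i 1}).encard = n := by
  have : {v : Fin n → ℝ | ∃ i : Fin n, v = Pi.single i 1} =
      (fun i : Fin n => (Pi.single i 1 : Fin n → ℝ)) '' univ := by
    ext v; simp [eq_comm]
  rw [this, Set.InjOn.encard_image (ee_injective.injOn), Set.encard_univ]
  simp

/-- enumeration of the roots -/
noncomputable def rootEnum {n : ℕ} (p : Fin n × Fin n) : Fin n → ℝ :=
  if p.1 = p.2 then Pi.single p.1 1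
  else if p.1 < p.2 then rt p.1 p.2 1 else rt p.2 p.1 (-1)

lemma fin_lt' {a b : Fin n} (h1 : ¬ a = b) (h2 : ¬ a < b) : b < a :=
  lt_of_le_of_ne (le_of_not_gt h2) fun h => h1 h.symm

lemma rootEnum_injective : Function.Injective (rootEnum (n := n)) := by
  rintro ⟨a, b⟩ ⟨c, d⟩ h
  simp only [rootEnum] at h
  by_cases h1 : a = b <;> by_cases h2 : c = d
  · rw [if_pos h1, if_pos h2] at h
    have hac : a = c := by
      by_contra hne; exact ee_ne_ee hne h
    simp [Prod.ext_iff, ← h1, ← h2, hac]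
  · rw [if_pos h1, if_neg h2] at h
    exfalso
    by_cases h3 : c < d
    · rw [if_pos h3] at h; exact ee_ne_rt h3.ne one_ne_zero h
    · rw [if_neg h3] at h; exact ee_ne_rt (fin_lt' h2 h3).ne (by norm_num) h
  · rw [if_neg h1, if_pos h2] at h
    exfalso
    by_cases h3 : a < b
    · rw [if_pos h3] at h; exact ee_ne_rt h3.ne one_ne_zero h.symm
    · rw [if_neg h3] at h; exact ee_ne_rt (fin_lt' h1 h3).ne (by norm_num) h.symm
  · rw [if_neg h1, if_neg h2] at h
    by_cases h3 : a < b <;> by_cases h4 : c < d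
    · rw [if_pos h3, if_pos h4] at h
      obtain ⟨h5, h6, -⟩ := rt_inj h3 h4 one_ne_zero one_ne_zero h
      simp [Prod.ext_iff, h5, h6]
    · rw [if_pos h3, if_neg h4] at h
      obtain ⟨-, -, h7⟩ := rt_inj h3 (fin_lt' h2 h4) one_ne_zero (by norm_num) h
      norm_num at h7
    · rw [if_neg h3, if_pos h4] at h
      obtain ⟨-, -, h7⟩ := rt_inj (fin_lt' h1 h3) h4 (by norm_num) one_ne_zero h
      norm_num at h7
    · rw [if_neg h3, if_neg h4] at h
      obtain ⟨h5, h6, -⟩ := rt_inj (fin_lt' h1 h3) (fin_lt' h2 h4) (by norm_num) (by norm_num) h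
      simp [Prod.ext_iff, h5, h6]

lemma BnRoots_eq_range : BnRoots n = Set.range (rootEnum (n := n)) := by
  ext v
  constructor
  · intro hv
    rcases root_form hv with ⟨m, rfl⟩ | ⟨i, j, c, hij, hc, rfl⟩
    · exact ⟨(m, m), by simp [rootEnum]⟩
    · rcases hc with rfl | rfl
      · exact ⟨(i, j), by simp [rootEnum, hij, hij.ne]⟩
      · exact ⟨(j, i), by simp [rootEnum, hij.ne', not_lt_of_gt hij]⟩
  · rintro ⟨⟨a, b⟩, rfl⟩
    simp only [rootEnum]
    split_ifs with h1 h2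
    · exact ee_mem a
    · exact rt_mem a b 1 h2 (Or.inl rfl)
    · exact rt_mem b a (-1) (fin_lt' h1 h2)
        (Or.inr rfl)

lemma BnRoots_finite : (BnRoots n).Finite := by
  rw [BnRoots_eq_range]; exact Set.finite_range _

lemma BnRoots_ncard : (BnRoots n).ncard = n * n := by
  rw [BnRoots_eq_range, ← Set.image_univ, Set.ncard_image_of_injective _ rootEnum_injective,
    Set.ncard_univ]
  simp [Nat.card_eq_fintype_card]
section Uniqueness

variable (M : Matroid (Fin n → ℝ))
  (hE : M.E = BnRoots n)
  (hind : ∀ I, M.Indep I ↔ I ⊆ BnRoots n ∧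
    LinearIndependent ℝ (fun v : I => (v : Fin n → ℝ)))

include hE hind

lemma cremona_pairs {b : Set (Fin n → ℝ)} (hb : IsCremonaBasis M b) :
    ∀ x ∈ b, ∀ y ∈ b, x ≠ y →
      ∃ w1 w2, w1 ≠ w2 ∧ w1 ∈ Fij M x y ∧ w2 ∈ Fij M x y := by
  classical
  obtain ⟨hBase, hDisj, hUnion⟩ := hb
  have hbE : b ⊆ BnRoots n := hE ▸ hBase.subset_ground
  have hb_encard : b.encard = n := by
    rw [hBase.encard_eq_encard_of_isBase (b0_base M hE hind), b0_encard]
  have hbfin : b.Finite := by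
    rw [← Set.encard_ne_top_iff, hb_encard]; simp
  have hUfin : (BnRoots n \ b).Finite := BnRoots_finite.diff
  set Bf := hbfin.toFinset with hBf
  set Uf := hUfin.toFinset with hUf
  have hBfcard : Bf.card = n := by
    have := hbfin.encard_eq_coe_toFinset_card
    rw [hb_encard] at this
    exact_mod_cast this.symm
  have hUfcard : Uf.card = n * n - n := by
    have h1 : (BnRoots n \ b).ncard = n * n - n := by
      rw [Set.ncard_diff hbE hbfin, BnRoots_ncard]
      congr 1
      rw [Set.ncard_def, hb_encard]; rfl
    have h2 := hUfin.encard_eq_coe_toFinset_card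
    rw [Set.ncard_def, h2] at h1
    simpa using h1
  set P := Bf.offDiag with hP
  have hPcard : P.card = n * n - n := by rw [hP, Finset.offDiag_card, hBfcard]
  -- each Fij has at most 2 elements
  have h1 : ∀ p ∈ P, (Uf.filter (fun w => w ∈ Fij M p.1 p.2)).card ≤ 2 := by
    intro p hp
    obtain ⟨hx, hy, hxy⟩ := Finset.mem_offDiag.mp hp
    rw [hBf, Set.Finite.mem_toFinset] at hx hy
    have hle := Fij_encard_le M hE hind (hbE hx) (hbE hy) hxy
    have hsub : ↑(Uf.filter (fun w => w ∈ Fij M p.1 p.2)) ⊆ Fij M p.1 p.2 := by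
      intro w hw
      simp only [Finset.coe_filter, mem_setOf_eq] at hw
      exact hw.2
    have hmono := (Set.encard_mono hsub).trans hle
    rw [Set.encard_coe_eq_coe_finsetCard] at hmono
    exact_mod_cast hmono
  -- each uncovered element is covered exactly twice
  have hcover : ∀ w ∈ Uf, (P.filter (fun p => w ∈ Fij M p.1 p.2)).card = 2 := by
    intro w hw
    rw [hUf, Set.Finite.mem_toFinset] at hw
    have hw' : w ∈ M.E \ b := by rw [hE]; exact hw
    rw [← hUnion] at hw'
    simp only [mem_iUnion] at hw'
    obtain ⟨x, hx, y, hy, hxy, hwF⟩ := hw'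
    have hfilter : P.filter (fun p => w ∈ Fij M p.1 p.2) =
        {(x, y), (y, x)} := by
      ext ⟨a, a'⟩
      simp only [Finset.mem_filter, hP, Finset.mem_offDiag, hBf,
        Set.Finite.mem_toFinset, Finset.mem_insert, Finset.mem_singleton, Prod.mk.injEq]
      constructor
      · rintro ⟨⟨haB, haB', hab⟩, hwab⟩
        have hpair : ({a, a'} : Set (Fin n → ℝ)) = {x, y} := by
          by_contra hne
          exact Set.disjoint_left.mp
            (hDisj a haB a' haB' x hx y hy hab hxy hne) hwab hwF
        rcases Set.pair_eq_pair_iff.mp hpair with ⟨rfl, rfl⟩ | ⟨rfl, rfl⟩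
        · exact Or.inl ⟨rfl, rfl⟩
        · exact Or.inr ⟨rfl, rfl⟩
      · rintro (⟨rfl, rfl⟩ | ⟨rfl, rfl⟩)
        · exact ⟨⟨hx, hy, hxy⟩, hwF⟩
        · exact ⟨⟨hy, hx, hxy.symm⟩, by rw [Fij_comm]; exact hwF⟩
    rw [hfilter, Finset.card_insert_of_notMem, Finset.card_singleton]
    simp only [Finset.mem_singleton, Prod.mk.injEq]
    rintro ⟨h1, -⟩
    exact hxy h1
  -- double counting
  have hsum : ∑ p ∈ P, (Uf.filter (fun w => w ∈ Fij M p.1 p.2)).card = 2 * P.card := by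
    have e1 : ∀ p ∈ P, (Uf.filter (fun w => w ∈ Fij M p.1 p.2)).card =
        ∑ w ∈ Uf, ite (w ∈ Fij M p.1 p.2) 1 0 := fun p _ => Finset.card_filter _ _
    rw [Finset.sum_congr rfl e1, Finset.sum_comm]
    have e2 : ∀ w ∈ Uf, ∑ p ∈ P, ite (w ∈ Fij M p.1 p.2) 1 0 = 2 := by
      intro w hw
      rw [← Finset.card_filter]
      exact hcover w hw
    rw [Finset.sum_congr rfl e2, Finset.sum_const, smul_eq_mul, hUfcard, hPcard, mul_comm]
  -- every pair meets the bound exactly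
  have hall : ∀ p ∈ P, (Uf.filter (fun w => w ∈ Fij M p.1 p.2)).card = 2 := by
    by_contra hcon
    push_neg at hcon
    obtain ⟨p0, hp0, hne⟩ := hcon
    have hlt := Finset.sum_lt_sum h1 ⟨p0, hp0, lt_of_le_of_ne (h1 p0 hp0) hne⟩
    rw [hsum, Finset.sum_const, smul_eq_mul] at hlt
    omega
  intro x hx y hy hxy
  have hp : (x, y) ∈ P := by
    rw [hP, Finset.mem_offDiag]
    exact ⟨hbfin.mem_toFinset.mpr hx, hbfin.mem_toFinset.mpr hy, hxy⟩
  have hcard := hall (x, y) hp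
  obtain ⟨w1, hw1, w2, hw2, h12⟩ := Finset.one_lt_card.mp (by rw [hcard]; norm_num)
  exact ⟨w1, w2, h12, (Finset.mem_filter.mp hw1).2, (Finset.mem_filter.mp hw2).2⟩

lemma cremona_unique (hn : 3 ≤ n) {b : Set (Fin n → ℝ)} (hb : IsCremonaBasis M b) :
    b = {v : Fin n → ℝ | ∃ i : Fin n, v = Pi.single i 1} := by
  classical
  have hbE : b ⊆ BnRoots n := hE ▸ hb.1.subset_ground
  have hb_encard : b.encard = n := by
    rw [hb.1.encard_eq_encard_of_isBase (b0_base M hE hind), b0_encard]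
  have hbfin : b.Finite := by
    rw [← Set.encard_ne_top_iff, hb_encard]; simp
  have hBfcard : hbfin.toFinset.card = n := by
    have := hbfin.encard_eq_coe_toFinset_card
    rw [hb_encard] at this
    exact_mod_cast this.symm
  have hsub : b ⊆ {v : Fin n → ℝ | ∃ i : Fin n, v = Pi.single i 1} := by
    intro x hxb
    rcases root_form (hbE hxb) with ⟨m, rfl⟩ | ⟨i, j, c, hij, hc, rfl⟩
    · exact ⟨m, rfl⟩
    exfalso
    have hc0 : c ≠ 0 := by rcases hc with rfl | rfl <;> norm_num
    -- pick two further elements of b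
    obtain ⟨y, hyB, hyx⟩ := Finset.exists_mem_ne (by rw [hBfcard]; omega) (rt i j c)
    have hyb : y ∈ b := hbfin.mem_toFinset.mp hyB
    have hcard2 : 0 < ((hbfin.toFinset.erase (rt i j c)).erase y).card := by
      rw [Finset.card_erase_of_mem, Finset.card_erase_of_mem]
      · rw [hBfcard]; omega
      · exact hbfin.mem_toFinset.mpr hxb
      · exact Finset.mem_erase.mpr ⟨hyx, hyB⟩
    obtain ⟨z, hz⟩ := Finset.card_pos.mp hcard2
    obtain ⟨hzy, hz'⟩ := Finset.mem_erase.mp hz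
    obtain ⟨hzx, hzB⟩ := Finset.mem_erase.mp hz'
    have hzb : z ∈ b := hbfin.mem_toFinset.mp hzB
    -- structure of the pair (x, y)
    have hgetplane : ∀ w ∈ b, w ≠ rt i j c → w ∈ span ℝ
        ({Pi.single i 1, Pi.single j 1} : Set (Fin n → ℝ)) := by
      intro w hwb hwx
      obtain ⟨w1, w2, h12, hw1, hw2⟩ :=
        cremona_pairs M hE hind ⟨hb.1, hb.2.1, hb.2.2⟩ (rt i j c) hxb w hwb (Ne.symm hwx)
      obtain ⟨i', j', hij', hxR, hwR, -, -⟩ :=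
        Fij_structure M hE hind (hbE hxb) (hbE hwb) (Ne.symm hwx) hw1 hw2 h12
      have hii : i' = i ∧ j' = j := by
        rcases hxR with h | h | h | h
        · exact absurd h.symm (ee_ne_rt hij.ne hc0)
        · exact absurd h.symm (ee_ne_rt hij.ne hc0)
        · obtain ⟨h1, h2, -⟩ := rt_inj hij hij' hc0 one_ne_zero h
          exact ⟨h1.symm, h2.symm⟩
        · obtain ⟨h1, h2, -⟩ := rt_inj hij hij' hc0 (by norm_num) h
          exact ⟨h1.symm, h2.symm⟩
      refine (R4_subset hij ?_).2
      rwa [hii.1, hii.2] at hwR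
    have hyW := hgetplane y hyb hyx
    have hzW := hgetplane z hzb hzx
    have hspanyz := two_span (hbE hyb) (hbE hzb) (Ne.symm hzy) hyW hzW
    have hxW : rt i j c ∈ span ℝ
        ({Pi.single i 1, Pi.single j 1} : Set (Fin n → ℝ)) := by
      rw [rt]
      exact add_mem (Submodule.subset_span (Or.inl rfl))
        (Submodule.smul_mem _ _ (Submodule.subset_span (Or.inr rfl)))
    rw [← hspanyz] at hxW
    have hxyz : M.Indep {rt i j c, y, z} := hb.1.indep.subset (by
      rintro v (rfl | rfl | rfl) <;> assumption)
    have hli := ((hind _).mp hxyz).2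
    have hxnot : rt i j c ∉ ({y, z} : Set (Fin n → ℝ)) := by
      rintro (rfl | rfl)
      · exact hyx rfl
      · exact hzx rfl
    exact ((linearIndepOn_id_insert hxnot).mp hli).2 hxW
  exact hb.1.eq_of_subset_isBase (b0_base M hE hind) hsub

end Uniqueness


/-- For `n ≥ 3`, the `Bₙ` root-system matroid has
`{x₁, ..., xₙ}` as its unique Cremona basis. -/
theorem stmt12 (n : ℕ) (hn : 3 ≤ n) (M : Matroid (Fin n → ℝ))
    (hE : M.E = BnRoots n)
    (hind : ∀ I, M.Indep I ↔ I ⊆ BnRoots n ∧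
      LinearIndependent ℝ (fun v : I => (v : Fin n → ℝ))) :
    ∀ b, IsCremonaBasis M b ↔ b = {v | ∃ i : Fin n, v = Pi.single i 1} := by
  intro b
  constructor
  · intro hb
    exact cremona_unique M hE hind hn hb
  · rintro rfl
    exact b0_cremona M hE hind
end

section
/- The linear map φ on ℝ^7/ℝ𝟙 induced by sending v_1 ↦ v_{{2,3,5}}, v_2 ↦ v_{{1,3,6}}, v_3 ↦ v_{{1,2,4}}, v_4 ↦ v_{{3,4,7}}, v_5 ↦ v_{{1,5,7}}, v_6 ↦ v_{{2,6,7}}, v_7 ↦ v_{{4,5,6}} (where v_T = Σ_{k∈T} v_k), written with respect to the basis v_1,...,v_6 of ℝ^7/ℝ𝟙, has determinant −8; in particular φ does not arise from a lattice automorphism of ℤ^7/ℤ𝟙. -/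
open Set Submodule

/-- The images of the seven basis vectors: the rank-2 flats of the Fano matroid
(with indices shifted down by one, so that `vₖ` corresponds to index `k-1`). -/
def fanoFlat : Fin 7 → Finset (Fin 7) :=
  ![{1, 2, 4}, {0, 2, 5}, {0, 1, 3}, {2, 3, 6}, {0, 4, 6}, {1, 5, 6}, {3, 4, 5}]

/-- The 7×7 matrix of the lift of `φ`, sending `vⱼ` to `v_{Tⱼ}`, the indicator vector
of the corresponding rank-2 flat. -/
def fanoMat : Matrix (Fin 7) (Fin 7) ℝ := fun i j => if i ∈ fanoFlat j then 1 else 0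

/-- The quotient `ℝ⁷/ℝ𝟙`. -/
abbrev QR := (Fin 7 → ℝ) ⧸ (span ℝ {(fun _ => (1 : ℝ) : Fin 7 → ℝ)})

/-- The lattice quotient `ℤ⁷/ℤ𝟙`. -/
abbrev QZ := (Fin 7 → ℤ) ⧸ (span ℤ {(fun _ => (1 : ℤ) : Fin 7 → ℤ)})

/-- Coordinatewise cast `ℤ⁷ → ℝ⁷`. -/
def castPi : (Fin 7 → ℤ) →ₗ[ℤ] (Fin 7 → ℝ) where
  toFun z i := (z i : ℝ)
  map_add' x y := by funext i; simp
  map_smul' c x := by funext i; simp [Pi.smul_apply]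

/-- The induced map `ℤ⁷/ℤ𝟙 → ℝ⁷/ℝ𝟙`. -/
noncomputable def iotaZR : QZ →ₗ[ℤ] QR :=
  Submodule.liftQ _
    (((span ℝ {(fun _ => (1 : ℝ) : Fin 7 → ℝ)}).mkQ.restrictScalars ℤ).comp castPi)
    (by
      rw [Submodule.span_le]
      rintro x hx
      rw [Set.mem_singleton_iff] at hx
      subst hx
      simp only [SetLike.mem_coe, LinearMap.mem_ker, LinearMap.comp_apply,
        LinearMap.coe_restrictScalars, Submodule.mkQ_apply]
      have h1 : castPi (fun _ => (1 : ℤ)) = fun _ => (1 : ℝ) := by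
        funext i; simp [castPi]
      rw [h1, Submodule.Quotient.mk_eq_zero]
      exact Submodule.subset_span rfl)

set_option maxRecDepth 8000
set_option maxHeartbeats 2000000

def fanoMatZ : Matrix (Fin 7) (Fin 7) ℤ := fun i j => if i ∈ fanoFlat j then 1 else 0
def fanoMat2 : Matrix (Fin 7) (Fin 7) (ZMod 2) := fun i j => if i ∈ fanoFlat j then 1 else 0

lemma key2 : ∀ z : Fin 7 → ZMod 2, ¬ (∀ i : Fin 7,
    (if i = 0 then (1 : ZMod 2) else 0) - fanoMat2.mulVec z i = 1 - fanoMat2.mulVec z 0) := by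
  decide

def M6 : Matrix (Fin 6) (Fin 6) ℝ :=
  !![0,1,1,-1,0,-1; 1,0,1,-1,-1,0; 1,1,0,0,-1,-1; 0,0,1,0,-1,-1; 1,0,0,-1,0,-1; 0,1,0,-1,-1,0]

lemma detM6 : M6.det = -8 := by
  simp +decide [M6, Matrix.det_succ_row_zero, Fin.sum_univ_succ, Fin.succAbove]
  norm_num

lemma mk_eq_sum (B : Module.Basis (Fin 6) ℝ QR)
    (hB : ∀ i : Fin 6, B i = Submodule.Quotient.mk (Pi.single i.castSucc (1 : ℝ)))
    (x : Fin 7 → ℝ) :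
    (Submodule.Quotient.mk x : QR) = ∑ i : Fin 6, (x i.castSucc - x 6) • B i := by
  have h2 : ∑ i : Fin 6, (x i.castSucc - x 6) • B i
      = (Submodule.Quotient.mk (∑ i : Fin 6,
          (x i.castSucc - x 6) • (Pi.single (i.castSucc) (1:ℝ) : Fin 7 → ℝ)) : QR) := by
    simp_rw [hB]
    simp only [← Submodule.mkQ_apply, ← map_smul, ← map_sum]
  rw [h2, Submodule.Quotient.eq]
  have key : x - (∑ i : Fin 6, (x i.castSucc - x 6) • (Pi.single (i.castSucc) (1:ℝ) : Fin 7 → ℝ))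
      = x 6 • (fun _ => (1:ℝ)) := by
    have cs0 : Fin.castSucc (0:Fin 6) = (0:Fin 7) := rfl
    have cs1 : Fin.castSucc (1:Fin 6) = (1:Fin 7) := rfl
    have cs2 : Fin.castSucc (2:Fin 6) = (2:Fin 7) := rfl
    have cs3 : Fin.castSucc (3:Fin 6) = (3:Fin 7) := rfl
    have cs4 : Fin.castSucc (4:Fin 6) = (4:Fin 7) := rfl
    have cs5 : Fin.castSucc (5:Fin 6) = (5:Fin 7) := rfl
    funext j
    fin_cases j <;>
      simp +decide [Fin.sum_univ_six, Pi.single_apply, cs0, cs1, cs2, cs3, cs4, cs5]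
  rw [key]
  exact Submodule.smul_mem _ _ (Submodule.subset_span rfl)

lemma mulVec_castR (z : Fin 7 → ℤ) :
    fanoMat.mulVec (castPi z) = castPi (fanoMatZ.mulVec z) := by
  funext i
  simp only [fanoMat, fanoMatZ, castPi, Matrix.mulVec, dotProduct,
    LinearMap.coe_mk, AddHom.coe_mk]
  push_cast [apply_ite (Int.cast : ℤ → ℝ)]
  rfl

lemma mulVec_cast2 (z : Fin 7 → ℤ) (i : Fin 7) :
    ((fanoMatZ.mulVec z i : ℤ) : ZMod 2) = fanoMat2.mulVec (fun j => ((z j : ZMod 2))) i := by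
  simp only [fanoMatZ, fanoMat2, Matrix.mulVec, dotProduct]
  push_cast [apply_ite (Int.cast : ℤ → ZMod 2)]
  rfl

/-- The endomorphism `φ` of `ℝ⁷/ℝ𝟙` induced by `vₖ ↦ v_{Tₖ}` for the
rank-2 flats of the Fano matroid has determinant `-8` with respect to the basis
`v₁, ..., v₆`; in particular it does not arise from a lattice automorphism of `ℤ⁷/ℤ𝟙`. -/
theorem stmt14
    (φ : QR →ₗ[ℝ] QR)
    (hφ : ∀ x : Fin 7 → ℝ, φ (Submodule.Quotient.mk x) =
      Submodule.Quotient.mk (fanoMat.mulVec x))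
    (B : Module.Basis (Fin 6) ℝ QR)
    (hB : ∀ i : Fin 6, B i = Submodule.Quotient.mk (Pi.single i.castSucc (1 : ℝ))) :
    (LinearMap.toMatrix B B φ).det = -8 ∧
    ¬ ∃ ψ : QZ ≃ₗ[ℤ] QZ, ∀ w : QZ,
      iotaZR (ψ w) = (φ.restrictScalars ℤ) (iotaZR w) := by
  
  constructor
  · have hM : LinearMap.toMatrix B B φ = M6 := by
      ext i j
      rw [LinearMap.toMatrix_apply, hB j, hφ, Matrix.mulVec_single,
        mk_eq_sum B hB, Module.Basis.repr_sum_self]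
      fin_cases i <;> fin_cases j <;>
        simp +decide [fanoMat, fanoFlat, M6] <;> rfl
    rw [hM]; exact detM6
  · rintro ⟨ψ, hψ⟩
    obtain ⟨z, hz⟩ := Submodule.Quotient.mk_surjective _
      (ψ.symm (Submodule.Quotient.mk (Pi.single 0 1) : QZ))
    have h1 := hψ (Submodule.Quotient.mk z)
    have hψz : ψ (Submodule.Quotient.mk z) = (Submodule.Quotient.mk (Pi.single 0 1) : QZ) := by
      rw [hz]; exact ψ.apply_symm_apply _
    rw [hψz] at h1
    have hiota : ∀ y : Fin 7 → ℤ,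
        iotaZR (Submodule.Quotient.mk y) = (Submodule.Quotient.mk (castPi y) : QR) := fun y => rfl
    rw [hiota, hiota, LinearMap.restrictScalars_apply, hφ, mulVec_castR] at h1
    rw [Submodule.Quotient.eq, Submodule.mem_span_singleton] at h1
    obtain ⟨c, hc⟩ := h1
    have heq : ∀ i : Fin 7,
        ((Pi.single (0:Fin 7) (1:ℤ) : Fin 7 → ℤ) i) - fanoMatZ.mulVec z i
          = 1 - fanoMatZ.mulVec z 0 := by
      intro i
      have hi := congrFun hc i
      have h0 := congrFun hc 0
      simp only [castPi, LinearMap.coe_mk, AddHom.coe_mk, Pi.smul_apply, Pi.sub_apply,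
        smul_eq_mul, mul_one] at hi h0
      have : ((Pi.single (0:Fin 7) (1:ℤ) : Fin 7 → ℤ) i : ℝ) - (fanoMatZ.mulVec z i : ℝ)
          = ((Pi.single (0:Fin 7) (1:ℤ) : Fin 7 → ℤ) 0 : ℝ) - (fanoMatZ.mulVec z 0 : ℝ) := by
        rw [← hi, ← h0]
      have hs : ((Pi.single (0:Fin 7) (1:ℤ) : Fin 7 → ℤ) 0) = 1 := by simp
      rw [hs] at this
      exact_mod_cast this
    apply key2 (fun j => ((z j : ZMod 2)))
    intro i
    have h := congrArg (fun t : ℤ => ((t : ZMod 2))) (heq i)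
    push_cast at h
    rw [mulVec_cast2, mulVec_cast2] at h
    rw [← h]
    congr 1
    simp [Pi.single_apply, apply_ite (Int.cast : ℤ → ZMod 2)]
end

section
/- Let M be a simple connected matroid of rank d+1 ≥ 3 with two different Cremona bases b and b*, and suppose 0 < i < j are such that b_i, b_j ∈ b \ b* and F_{ij} ≠ ∅. Then F_{ij} consists of exactly one element; i.e., the rank-2 flat cl{b_i, b_j} has exactly 3 elements. -/
open Set

variable {α : Type*}

namespace CremAux

variable {M : Matroid α} {b : Set α} {x y u v p q : α}

/-! ### pure set combinatorics -/

lemma pair_eq_of_mem {s t u v : α} (hs : s = u ∨ s = v) (ht : t = u ∨ t = v) (hst : s ≠ t) :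
    ({s, t} : Set α) = {u, v} := by
  rcases hs with rfl | rfl <;> rcases ht with rfl | rfl <;>
    first
      | exact absurd rfl hst
      | rfl
      | exact Set.pair_comm _ _

lemma pair_sub3 {a c e s t : α} (hs : s = a ∨ s = c ∨ s = e) (ht : t = a ∨ t = c ∨ t = e)
    (hst : s ≠ t) (h1 : ({s, t} : Set α) ≠ {a, c}) (h2 : ({s, t} : Set α) ≠ {a, e}) :
    ({s, t} : Set α) = {c, e} := by
  rcases hs with rfl | rfl | rfl <;> rcases ht with rfl | rfl | rfl <;>
    first
      | exact absurd rfl hst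
      | rfl
      | exact Set.pair_comm _ _
      | exact absurd rfl h1
      | exact absurd (Set.pair_comm _ _) h1
      | exact absurd rfl h2
      | exact absurd (Set.pair_comm _ _) h2

lemma comb {u v u' v' s t s' t' : α}
    (huv : u ≠ v) (hst : s ≠ t) (hs't' : s' ≠ t')
    (h31 : ({s, t} : Set α) ≠ {u, v}) (h32 : ({s, t} : Set α) ≠ {u', v'})
    (h41 : ({s', t'} : Set α) ≠ {u, v}) (h42 : ({s', t'} : Set α) ≠ {u', v'})
    (hi : s = u ∨ s = v ∨ s = u' ∨ s = v') (hi2 : t = u ∨ t = v ∨ t = u' ∨ t = v')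
    (hii : s' = u ∨ s' = v ∨ s' = u' ∨ s' = v') (hii2 : t' = u ∨ t' = v ∨ t' = u' ∨ t' = v')
    (hiii : u = u' ∨ u = v' ∨ u = s ∨ u = t)
    (hiii2 : v = u' ∨ v = v' ∨ v = s ∨ v = t) :
    ({s, t} : Set α) = {s', t'} := by
  by_cases hKey : u = u' ∨ u = v' ∨ v = u' ∨ v = v'
  · rcases hKey with h | h | h | h
    · have conv : ∀ {r : α}, (r = u ∨ r = v ∨ r = u' ∨ r = v') → (r = u ∨ r = v ∨ r = v') := by
        intro r hr
        rcases hr with h' | h' | h' | h'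
        exacts [Or.inl h', Or.inr (Or.inl h'), Or.inl (h'.trans h.symm), Or.inr (Or.inr h')]
      have h2' : ({s, t} : Set α) ≠ {u, v'} := by rw [h]; exact h32
      have h2'' : ({s', t'} : Set α) ≠ {u, v'} := by rw [h]; exact h42
      exact (pair_sub3 (conv hi) (conv hi2) hst h31 h2').trans
        (pair_sub3 (conv hii) (conv hii2) hs't' h41 h2'').symm
    · have conv : ∀ {r : α}, (r = u ∨ r = v ∨ r = u' ∨ r = v') → (r = u ∨ r = v ∨ r = u') := by
        intro r hr
        rcases hr with h' | h' | h' | h'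
        exacts [Or.inl h', Or.inr (Or.inl h'), Or.inr (Or.inr h'), Or.inl (h'.trans h.symm)]
      have h2' : ({s, t} : Set α) ≠ {u, u'} := fun hEq => h32 (by
        rw [hEq, ← h]; exact Set.pair_comm u u')
      have h2'' : ({s', t'} : Set α) ≠ {u, u'} := fun hEq => h42 (by
        rw [hEq, ← h]; exact Set.pair_comm u u')
      exact (pair_sub3 (conv hi) (conv hi2) hst h31 h2').trans
        (pair_sub3 (conv hii) (conv hii2) hs't' h41 h2'').symm
    · have conv : ∀ {r : α}, (r = u ∨ r = v ∨ r = u' ∨ r = v') → (r = v ∨ r = u ∨ r = v') := by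
        intro r hr
        rcases hr with h' | h' | h' | h'
        exacts [Or.inr (Or.inl h'), Or.inl h', Or.inl (h'.trans h.symm), Or.inr (Or.inr h')]
      have h1' : ({s, t} : Set α) ≠ {v, u} := fun hEq => h31 (hEq.trans (Set.pair_comm v u))
      have h1'' : ({s', t'} : Set α) ≠ {v, u} := fun hEq => h41 (hEq.trans (Set.pair_comm v u))
      have h2' : ({s, t} : Set α) ≠ {v, v'} := by rw [h]; exact h32
      have h2'' : ({s', t'} : Set α) ≠ {v, v'} := by rw [h]; exact h42
      exact (pair_sub3 (conv hi) (conv hi2) hst h1' h2').trans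
        (pair_sub3 (conv hii) (conv hii2) hs't' h1'' h2'').symm
    · have conv : ∀ {r : α}, (r = u ∨ r = v ∨ r = u' ∨ r = v') → (r = v ∨ r = u ∨ r = u') := by
        intro r hr
        rcases hr with h' | h' | h' | h'
        exacts [Or.inr (Or.inl h'), Or.inl h', Or.inr (Or.inr h'), Or.inl (h'.trans h.symm)]
      have h1' : ({s, t} : Set α) ≠ {v, u} := fun hEq => h31 (hEq.trans (Set.pair_comm v u))
      have h1'' : ({s', t'} : Set α) ≠ {v, u} := fun hEq => h41 (hEq.trans (Set.pair_comm v u))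
      have h2' : ({s, t} : Set α) ≠ {v, u'} := fun hEq => h32 (by
        rw [hEq, ← h]; exact Set.pair_comm v u')
      have h2'' : ({s', t'} : Set α) ≠ {v, u'} := fun hEq => h42 (by
        rw [hEq, ← h]; exact Set.pair_comm v u')
      exact (pair_sub3 (conv hi) (conv hi2) hst h1' h2').trans
        (pair_sub3 (conv hii) (conv hii2) hs't' h1'' h2'').symm
  · push_neg at hKey
    obtain ⟨k1, k2, k3, k4⟩ := hKey
    have hu : u = s ∨ u = t := by
      rcases hiii with h | h | h | h
      exacts [absurd h k1, absurd h k2, Or.inl h, Or.inr h]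
    have hv : v = s ∨ v = t := by
      rcases hiii2 with h | h | h | h
      exacts [absurd h k3, absurd h k4, Or.inl h, Or.inr h]
    exact absurd (pair_eq_of_mem hu hv huv).symm h31

/-! ### basic matroid helpers -/

lemma mem_closure_singleton (hs : MSimple M) (hy : y ∈ M.E)
    (hp : p ∈ M.closure {y}) : p = y := by
  have hpE : p ∈ M.E := M.closure_subset_ground _ hp
  by_contra hne
  have hi : M.Indep {y, p} := hs y hy p hpE
  have h2 := hi.notMem_closure_sdiff_of_mem (show p ∈ ({y, p} : Set α) by simp)
  apply h2
  have : ({y, p} : Set α) \ {p} = {y} := by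
    ext a; simp only [mem_diff, mem_insert_iff, mem_singleton_iff]
    constructor
    · rintro ⟨h1 | h1, h2⟩ <;> tauto
    · rintro rfl; exact ⟨Or.inl rfl, fun h => hne h.symm⟩
  rw [this]; exact hp

lemma not_mem_closure_of_indep (hb : M.Indep b) (hx : x ∈ b) {B : Set α}
    (hB : B ⊆ b) (hxB : x ∉ B) : x ∉ M.closure B := by
  intro h
  exact hb.notMem_closure_sdiff_of_mem hx
    (M.closure_subset_closure (subset_diff_singleton hB hxB) h)

/-- key covering lemma via fundamental circuit uniqueness -/
lemma cover (hs : MSimple M) (hb : M.Indep b) (hxb : x ∈ b) (hyb : y ∈ b)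
    {B : Set α} (hB : B ⊆ b) (hp1 : p ∈ M.closure {x, y}) (hp2 : p ∉ ({x, y} : Set α))
    (hp3 : p ∈ M.closure B) : x ∈ B ∧ y ∈ B := by
  have hu : M.Indep ({x, y} ∪ B) := hb.subset (union_subset (pair_subset hxb hyb) hB)
  have hint := hu.closure_inter_eq_inter_closure
  have hpin : p ∈ M.closure (({x, y} : Set α) ∩ B) := by rw [hint]; exact ⟨hp1, hp3⟩
  have hyE : y ∈ M.E := hb.subset_ground hyb
  have hxE : x ∈ M.E := hb.subset_ground hxb
  constructor
  · by_contra hxB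
    have hsub : ({x, y} : Set α) ∩ B ⊆ {y} := by
      intro a ⟨ha1, ha2⟩
      rcases ha1 with rfl | rfl
      · exact absurd ha2 hxB
      · rfl
    have := mem_closure_singleton hs hyE (M.closure_subset_closure hsub hpin)
    exact hp2 (by simp [this])
  · by_contra hyB
    have hsub : ({x, y} : Set α) ∩ B ⊆ {x} := by
      intro a ⟨ha1, ha2⟩
      rcases ha1 with rfl | rfl
      · rfl
      · exact absurd ha2 hyB
    have := mem_closure_singleton hs hxE (M.closure_subset_closure hsub hpin)
    exact hp2 (by simp [this])

/-- exchange -/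
lemma exch (hs : MSimple M) {a c : α} (hc : c ∈ M.E) (hp : p ∈ M.closure {a, c})
    (hpc : p ≠ c) : a ∈ M.closure {p, c} := by
  have h1 : p ∉ M.closure {c} := fun h => hpc (mem_closure_singleton hs hc h)
  have : p ∈ M.closure (insert a {c}) \ M.closure {c} := ⟨by simpa using hp, h1⟩
  simpa using (Matroid.closure_exchange this).1

/-- two distinct points in the closure of an independent pair span the same line -/
lemma two_point_closure (hs : MSimple M) (hI : M.Indep {u, v}) (huv : u ≠ v)
    (hp : p ∈ M.closure {u, v}) (hq : q ∈ M.closure {u, v}) (hpq : p ≠ q) :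
    M.closure {p, q} = M.closure {u, v} := by
  have hpE : p ∈ M.E := M.closure_subset_ground _ hp
  have hqE : q ∈ M.E := M.closure_subset_ground _ hq
  have hpqI : M.Indep {p, q} := hs p hpE q hqE
  obtain ⟨J, hJ, hsubJ⟩ := hpqI.subset_isBasis_of_subset (pair_subset hp hq)
    (M.closure_subset_ground _)
  have hbas2 : M.IsBasis {u, v} (M.closure {u, v}) := hI.isBasis_closure
  have hcard : J.encard = 2 := by
    rw [hJ.encard_eq_encard hbas2, encard_pair huv]
  have hfinJ : J.Finite := finite_of_encard_eq_coe hcard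
  have hJeq : ({p, q} : Set α) = J := by
    apply hfinJ.eq_of_subset_of_encard_le' hsubJ
    rw [hcard, encard_pair hpq]
  rw [hJeq, hJ.closure_eq_closure, M.closure_closure]

lemma closure_pair_le {W : Set α} (h1 : p ∈ M.closure W) (h2 : q ∈ M.closure W) :
    M.closure {p, q} ⊆ M.closure W :=
  Matroid.closure_subset_closure_of_subset_closure (pair_subset h1 h2)

/-! ### Cremona helpers -/

lemma Fij_comm : Fij M x y = Fij M y x := by
  unfold Fij; rw [Set.pair_comm x y]

lemma Fij_pair_eq (hb : IsCremonaBasis M b) {i j i' j' : α} (hi : i ∈ b) (hj : j ∈ b)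
    (hij : i ≠ j) (hi' : i' ∈ b) (hj' : j' ∈ b) (hij' : i' ≠ j')
    (h1 : p ∈ Fij M i j) (h2 : p ∈ Fij M i' j') : ({i, j} : Set α) = {i', j'} := by
  by_contra hne
  exact (hb.2.1 i hi j hj i' hi' j' hj' hij hij' hne).ne_of_mem h1 h2 rfl

lemma Fij_subset_diff (hb : IsCremonaBasis M b) {i j : α} (hi : i ∈ b) (hj : j ∈ b)
    (hij : i ≠ j) : Fij M i j ⊆ M.E \ b := by
  intro p hp
  rw [← hb.2.2]
  exact mem_iUnion₂.2 ⟨i, hi, mem_iUnion₂.2 ⟨j, hj, mem_iUnion.2 ⟨hij, hp⟩⟩⟩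

lemma cremona_sigma (hb : IsCremonaBasis M b) (hp : p ∈ M.E \ b) :
    ∃ i j, i ∈ b ∧ j ∈ b ∧ i ≠ j ∧ p ∈ Fij M i j := by
  have := hb.2.2.symm.subset hp
  simp only [mem_iUnion] at this
  obtain ⟨i, hi, j, hj, hij, hF⟩ := this
  exact ⟨i, j, hi, hj, hij, hF⟩

/-! ### skew union independence -/

lemma skew_claim1 {S T B : Set α} (hfin : M.E.Finite) (hST : M.Indep (S ∪ T))
    (hd : Disjoint S T) (hB : M.Indep B) (hBT : B ⊆ M.closure T) :
    M.Indep (S ∪ B) := by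
  have hS : M.Indep S := hST.subset subset_union_left
  have hT : M.Indep T := hST.subset subset_union_right
  obtain ⟨B2, hB2, hBB2⟩ := hB.subset_isBasis_of_subset hBT (M.closure_subset_ground _)
  have hTbas : M.IsBasis T (M.closure T) := hT.isBasis_closure
  have hcard1 : B2.encard = T.encard := hB2.encard_eq_encard hTbas
  have hSclST : S ⊆ M.closure (S ∪ T) :=
    subset_union_left.trans (M.subset_closure _ hST.subset_ground)
  have hB2cl : B2 ⊆ M.closure T := hB2.subset
  have hSB_cl : S ∪ B2 ⊆ M.closure (S ∪ T) :=
    union_subset hSclST (hB2cl.trans (M.closure_subset_closure subset_union_right))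
  have hclB2 : M.closure B2 = M.closure T := by
    rw [hB2.closure_eq_closure, M.closure_closure]
  have hcl_sub : M.closure (S ∪ T) ⊆ M.closure (S ∪ B2) := by
    apply Matroid.closure_subset_closure_of_subset_closure
    apply union_subset
    · exact subset_union_left.trans (M.subset_closure _
        (union_subset hS.subset_ground (hB2cl.trans (M.closure_subset_ground _))))
    · intro t ht
      have : t ∈ M.closure B2 := hclB2 ▸ M.subset_closure T hT.subset_ground ht
      exact M.closure_subset_closure subset_union_right this
  obtain ⟨J, hJbas⟩ := M.exists_isBasis (S ∪ B2)
    (union_subset hS.subset_ground (hB2cl.trans (M.closure_subset_ground _)))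
  have hJ2 : M.IsBasis J (M.closure (S ∪ T)) := by
    apply hJbas.indep.isBasis_of_subset_of_subset_closure (hJbas.subset.trans hSB_cl)
    calc M.closure (S ∪ T) ⊆ M.closure (S ∪ B2) := hcl_sub
      _ = M.closure J := hJbas.closure_eq_closure.symm
  have hSTbas : M.IsBasis (S ∪ T) (M.closure (S ∪ T)) := hST.isBasis_closure
  have hScl : ∀ s ∈ S, s ∉ M.closure T := by
    intro s hsS hscl
    have hsT : s ∉ T := fun h => hd.ne_of_mem hsS h rfl
    exact hST.notMem_closure_sdiff_of_mem (Or.inl hsS)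
      (M.closure_subset_closure (subset_diff_singleton subset_union_right hsT) hscl)
  have hdisj2 : Disjoint S B2 := by
    rw [disjoint_left]
    intro s hsS hsB2
    exact hScl s hsS (hB2cl hsB2)
  have hcardJ : J.encard = (S ∪ B2).encard := by
    rw [hJ2.encard_eq_encard hSTbas, encard_union_eq hd, encard_union_eq hdisj2, hcard1]
  have hfinSB : (S ∪ B2).Finite := hfin.subset
    (union_subset hS.subset_ground (hB2cl.trans (M.closure_subset_ground _)))
  have hJeq : J = S ∪ B2 :=
    hfinSB.eq_of_subset_of_encard_le' hJbas.subset hcardJ.symm.le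
  have : M.Indep (S ∪ B2) := hJeq ▸ hJbas.indep
  exact this.subset (union_subset_union_right _ hBB2)

lemma skew_union {S T A B : Set α} (hfin : M.E.Finite) (hST : M.Indep (S ∪ T))
    (hd : Disjoint S T) (hA : M.Indep A) (hAS : A ⊆ M.closure S)
    (hB : M.Indep B) (hBT : B ⊆ M.closure T) : M.Indep (A ∪ B) := by
  have step1 : M.Indep (S ∪ B) := skew_claim1 hfin hST hd hB hBT
  have hScl : ∀ s ∈ S, s ∉ M.closure T := by
    intro s hsS hscl
    have hsT : s ∉ T := fun h => hd.ne_of_mem hsS h rfl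
    exact hST.notMem_closure_sdiff_of_mem (Or.inl hsS)
      (M.closure_subset_closure (subset_diff_singleton subset_union_right hsT) hscl)
  have hdBS : Disjoint B S := by
    rw [disjoint_left]; intro s hsB hsS; exact hScl s hsS (hBT hsB)
  have step2 : M.Indep (B ∪ A) :=
    skew_claim1 hfin (by rwa [union_comm] at step1) hdBS hA hAS
  rwa [union_comm]


set_option maxHeartbeats 2000000 in

lemma sub12 {a b c : α} : ({a, b} : Set α) ⊆ {a, b, c} := by
  intro w hw
  simp only [mem_insert_iff, mem_singleton_iff] at hw ⊢
  rcases hw with h | h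
  exacts [Or.inl h, Or.inr (Or.inl h)]

lemma sub13 {a b c : α} : ({a, c} : Set α) ⊆ {a, b, c} := by
  intro w hw
  simp only [mem_insert_iff, mem_singleton_iff] at hw ⊢
  rcases hw with h | h
  exacts [Or.inl h, Or.inr (Or.inr h)]

lemma sub23 {a b c : α} : ({b, c} : Set α) ⊆ {a, b, c} := by
  intro w hw
  simp only [mem_insert_iff, mem_singleton_iff] at hw ⊢
  rcases hw with h | h
  exacts [Or.inr (Or.inl h), Or.inr (Or.inr h)]

lemma sub12of4 {a b c d : α} : ({a, b} : Set α) ⊆ {a, b, c, d} := by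
  intro w hw
  simp only [mem_insert_iff, mem_singleton_iff] at hw ⊢
  rcases hw with h | h
  exacts [Or.inl h, Or.inr (Or.inl h)]

lemma sub34of4 {a b c d : α} : ({c, d} : Set α) ⊆ {a, b, c, d} := by
  intro w hw
  simp only [mem_insert_iff, mem_singleton_iff] at hw ⊢
  rcases hw with h | h
  exacts [Or.inr (Or.inr (Or.inl h)), Or.inr (Or.inr (Or.inr h))]

lemma Fxz_empty {bs : Set α} (hsimple : MSimple M)
    (hb : IsCremonaBasis M b) (hbs : IsCremonaBasis M bs)
    (hx : x ∈ b \ bs) (hy : y ∈ b \ bs) (hxy : x ≠ y)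
    (hu : u ∈ bs) (hv : v ∈ bs) (huv : u ≠ v)
    (hxc : x ∈ M.closure {u, v}) (hyc : y ∈ M.closure {u, v})
    {z : α} (hzb : z ∈ b) (hzx : z ≠ x) (hzy : z ≠ y) : Fij M x z = ∅ := by
  have hbI := hb.1.indep
  have hbsI := hbs.1.indep
  have hbE : b ⊆ M.E := hbI.subset_ground
  have hbsE : bs ⊆ M.E := hbsI.subset_ground
  obtain ⟨hxb, hxbs⟩ := hx
  obtain ⟨hyb, hybs⟩ := hy
  have hxz : x ≠ z := hzx.symm
  have hxE := hbE hxb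
  have hyE := hbE hyb
  have hzE := hbE hzb
  have hIuv : M.Indep {u, v} := hbsI.subset (pair_subset hu hv)
  have hL : M.closure {x, y} = M.closure {u, v} :=
    two_point_closure hsimple hIuv huv hxc hyc hxy
  have hxuv : x ∉ ({u, v} : Set α) := by
    simp only [mem_insert_iff, mem_singleton_iff]
    push_neg
    exact ⟨fun h => hxbs (h ▸ hu), fun h => hxbs (h ▸ hv)⟩
  have huvE : ({u, v} : Set α) ⊆ M.E := pair_subset (hbsE hu) (hbsE hv)
  have hucl : u ∈ M.closure {x, y} := by
    rw [hL]; exact M.subset_closure _ huvE (by simp)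
  have hvcl : v ∈ M.closure {x, y} := by
    rw [hL]; exact M.subset_closure _ huvE (by simp)
  have huF : u ∈ Fij M x y := ⟨hucl, fun h => by
    simp only [mem_insert_iff, mem_singleton_iff] at h
    rcases h with h | h; exacts [hxbs (h ▸ hu), hybs (h ▸ hu)]⟩
  have hvF : v ∈ Fij M x y := ⟨hvcl, fun h => by
    simp only [mem_insert_iff, mem_singleton_iff] at h
    rcases h with h | h; exacts [hxbs (h ▸ hv), hybs (h ▸ hv)]⟩
  have hunb : u ∉ b := (Fij_subset_diff hb hxb hyb hxy huF).2
  have hvnb : v ∉ b := (Fij_subset_diff hb hxb hyb hxy hvF).2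
  have coverx : ∀ {B : Set α}, B ⊆ bs → x ∈ M.closure B → u ∈ B ∧ v ∈ B :=
    fun {B} hB hcl => cover hsimple hbsI hu hv hB hxc hxuv hcl
  rw [Set.eq_empty_iff_forall_notMem]
  intro q hq
  have hqcl : q ∈ M.closure {x, z} := hq.1
  have hqEd : q ∈ M.E \ b := Fij_subset_diff hb hxb hzb hxz hq
  have hqE := hqEd.1
  have hqnb := hqEd.2
  have hqz : q ≠ z := fun h => hqnb (h ▸ hzb)
  have hqx : q ≠ x := fun h => hqnb (h ▸ hxb)
  have hzxy : z ∉ ({x, y} : Set α) := by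
    simp only [mem_insert_iff, mem_singleton_iff]
    push_neg
    exact ⟨hzx, hzy⟩
  have hpairne : ({x, z} : Set α) ≠ {x, y} := by
    intro hEq
    have hymem : y ∈ ({x, z} : Set α) := by rw [hEq]; simp
    simp only [mem_insert_iff, mem_singleton_iff] at hymem
    rcases hymem with h | h; exacts [hxy h.symm, hzy h.symm]
  have hqu : q ≠ u := fun h =>
    hpairne (Fij_pair_eq hb hxb hzb hxz hxb hyb hxy hq (by rw [h]; exact huF))
  have hqv : q ≠ v := fun h =>
    hpairne (Fij_pair_eq hb hxb hzb hxz hxb hyb hxy hq (by rw [h]; exact hvF))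
  have hxclqz : x ∈ M.closure {q, z} := exch hsimple hzE hqcl hqz
  have hzL : z ∉ M.closure {x, y} :=
    not_mem_closure_of_indep hbI hzb (pair_subset hxb hyb) hzxy
  have hqline : q ∉ M.closure {u, v} := by
    intro hqL
    have hqFxy : q ∈ Fij M x y := ⟨by rw [hL]; exact hqL, fun h => by
      simp only [mem_insert_iff, mem_singleton_iff] at h
      rcases h with h | h; exacts [hqx h, hqnb (h ▸ hyb)]⟩
    exact hpairne (Fij_pair_eq hb hxb hzb hxz hxb hyb hxy hq hqFxy)
  have hzline : z ∉ M.closure {u, v} := by rw [← hL]; exact hzL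
  by_cases hzbs : z ∈ bs
  · by_cases hqbs : q ∈ bs
    · obtain ⟨hu', hv'⟩ := coverx (pair_subset hqbs hzbs) hxclqz
      simp only [mem_insert_iff, mem_singleton_iff] at hu'
      rcases hu' with h | h
      exacts [hqu h.symm, hunb (h ▸ hzb)]
    · obtain ⟨s, t, hsbs, htbs, hst, hqF⟩ := cremona_sigma hbs ⟨hqE, hqbs⟩
      have hqst : q ∈ M.closure {s, t} := hqF.1
      have hx3 : x ∈ M.closure {s, t, z} :=
        closure_pair_le (W := {s, t, z}) (M.closure_subset_closure sub12 hqst)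
          (M.subset_closure _ (insert_subset (hbsE hsbs)
            (insert_subset (hbsE htbs) (singleton_subset_iff.2 hzE))) (by simp)) hxclqz
      obtain ⟨hu4, hv4⟩ := coverx
        (insert_subset hsbs (insert_subset htbs (singleton_subset_iff.2 hzbs))) hx3
      simp only [mem_insert_iff, mem_singleton_iff] at hu4 hv4
      have hu5 : u = s ∨ u = t := by
        rcases hu4 with h | h | h
        exacts [Or.inl h, Or.inr h, absurd (h ▸ hzb) hunb]
      have hv5 : v = s ∨ v = t := by
        rcases hv4 with h | h | h
        exacts [Or.inl h, Or.inr h, absurd (h ▸ hzb) hvnb]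
      exact hqline (by rw [pair_eq_of_mem hu5 hv5 huv]; exact hqst)
  · obtain ⟨s', t', hs'bs, ht'bs, hs't', hzF⟩ := cremona_sigma hbs ⟨hzE, hzbs⟩
    have hzst : z ∈ M.closure {s', t'} := hzF.1
    by_cases hqbs : q ∈ bs
    · have hx3 : x ∈ M.closure {q, s', t'} :=
        closure_pair_le
          (M.subset_closure _ (insert_subset hqE (insert_subset (hbsE hs'bs)
            (singleton_subset_iff.2 (hbsE ht'bs)))) (by simp))
          (M.closure_subset_closure (subset_insert q {s', t'}) hzst) hxclqz
      obtain ⟨hu4, hv4⟩ := coverx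
        (insert_subset hqbs (insert_subset hs'bs (singleton_subset_iff.2 ht'bs))) hx3
      simp only [mem_insert_iff, mem_singleton_iff] at hu4 hv4
      have hu5 : u = s' ∨ u = t' := by
        rcases hu4 with h | h | h
        exacts [absurd h.symm hqu, Or.inl h, Or.inr h]
      have hv5 : v = s' ∨ v = t' := by
        rcases hv4 with h | h | h
        exacts [absurd h.symm hqv, Or.inl h, Or.inr h]
      exact hzline (by rw [pair_eq_of_mem hu5 hv5 huv]; exact hzst)
    · obtain ⟨s, t, hsbs, htbs, hst, hqF⟩ := cremona_sigma hbs ⟨hqE, hqbs⟩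
      have hqst : q ∈ M.closure {s, t} := hqF.1
      have hx4 : x ∈ M.closure {s, t, s', t'} :=
        closure_pair_le (W := {s, t, s', t'}) (M.closure_subset_closure sub12of4 hqst)
          (M.closure_subset_closure sub34of4 hzst) hxclqz
      obtain ⟨hu4, hv4⟩ := coverx
        (insert_subset hsbs (insert_subset htbs (insert_subset hs'bs
          (singleton_subset_iff.2 ht'bs)))) hx4
      simp only [mem_insert_iff, mem_singleton_iff] at hu4 hv4
      have hS1 : ({u, v} : Set α) ≠ {s, t} := fun hEq =>
        hqline (by rw [hEq]; exact hqst)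
      have hS2 : ({u, v} : Set α) ≠ {s', t'} := fun hEq =>
        hzline (by rw [hEq]; exact hzst)
      have mixed : ∀ u0 v0 t0 t0' : α, u0 ∈ bs → v0 ∈ bs → u0 ≠ v0 → u0 ∉ b → v0 ∉ b →
          t0 ∈ bs → t0' ∈ bs → v0 ≠ t0' → t0 ≠ u0 → t0 ≠ v0 → t0' ≠ u0 →
          x ∈ M.closure {u0, v0} → M.closure {x, y} = M.closure {u0, v0} →
          u0 ∈ M.closure {x, y} → v0 ∈ M.closure {x, y} →
          q ∈ M.closure {u0, t0} → z ∈ M.closure {v0, t0'} → False := by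
        intro u0 v0 t0 t0' hu0 hv0 hu0v0 hu0nb hv0nb ht0 ht0' hv0t0' ht0u0 ht0v0 ht0'u0
          hxc0 hL0 hu0cl hv0cl hq0 hz0
        have hq_zx : q ∈ M.closure {z, x} := by rw [Set.pair_comm]; exact hqcl
        have hz_qx : z ∈ M.closure {q, x} := exch hsimple hxE hq_zx hqx
        have hz3 : z ∈ M.closure {u0, v0, t0} :=
          closure_pair_le (W := {u0, v0, t0}) (M.closure_subset_closure sub13 hq0)
            (M.closure_subset_closure sub12 hxc0) hz_qx
        have hznp : z ∉ ({v0, t0'} : Set α) := by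
          simp only [mem_insert_iff, mem_singleton_iff]
          push_neg
          exact ⟨fun h => hv0nb (h ▸ hzb), fun h => hzbs (h ▸ ht0')⟩
        obtain ⟨_, ht'mem⟩ := cover hsimple hbsI hv0 ht0'
          (insert_subset hu0 (insert_subset hv0 (singleton_subset_iff.2 ht0))) hz0 hznp hz3
        simp only [mem_insert_iff, mem_singleton_iff] at ht'mem
        have ht'eq : t0' = t0 := by
          rcases ht'mem with h | h | h
          exacts [absurd h ht0'u0, absurd h.symm hv0t0', h]
        rw [ht'eq] at hz0
        have hqt0 : q ≠ t0 := fun h => hqbs (h ▸ ht0)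
        have hu0_q : u0 ∈ M.closure {q, t0} := exch hsimple (hbsE ht0) hq0 hqt0
        have hu0nxy : u0 ∉ ({x, y} : Set α) := by
          simp only [mem_insert_iff, mem_singleton_iff]
          push_neg
          exact ⟨fun h => hxbs (h ▸ hu0), fun h => hybs (h ▸ hu0)⟩
        have hv0nxy : v0 ∉ ({x, y} : Set α) := by
          simp only [mem_insert_iff, mem_singleton_iff]
          push_neg
          exact ⟨fun h => hxbs (h ▸ hv0), fun h => hybs (h ▸ hv0)⟩
        by_cases ht0b : t0 ∈ b
        · have hu0_3 : u0 ∈ M.closure {x, z, t0} :=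
            closure_pair_le (W := {x, z, t0}) (M.closure_subset_closure sub12 hqcl)
              (M.subset_closure _ (insert_subset hxE (insert_subset hzE
                (singleton_subset_iff.2 (hbsE ht0)))) (by simp)) hu0_q
          obtain ⟨_, hymem⟩ := cover hsimple hbI hxb hyb
            (insert_subset hxb (insert_subset hzb (singleton_subset_iff.2 ht0b)))
            hu0cl hu0nxy hu0_3
          simp only [mem_insert_iff, mem_singleton_iff] at hymem
          rcases hymem with h | h | h
          exacts [hxy h.symm, hzy h.symm, hybs (h ▸ ht0)]
        · obtain ⟨i, j, hib, hjb, hij, htF⟩ := cremona_sigma hb ⟨hbsE ht0, ht0b⟩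
          have htij : t0 ∈ M.closure {i, j} := htF.1
          have hu0_4 : u0 ∈ M.closure {x, z, i, j} :=
            closure_pair_le (W := {x, z, i, j}) (M.closure_subset_closure sub12of4 hqcl)
              (M.closure_subset_closure sub34of4 htij) hu0_q
          obtain ⟨_, hymem⟩ := cover hsimple hbI hxb hyb
            (insert_subset hxb (insert_subset hzb (insert_subset hib
              (singleton_subset_iff.2 hjb)))) hu0cl hu0nxy hu0_4
          simp only [mem_insert_iff, mem_singleton_iff] at hymem
          have hyij : y = i ∨ y = j := by
            rcases hymem with h | h | h | h
            exacts [absurd h.symm hxy, absurd h.symm hzy, Or.inl h, Or.inr h]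
          have final : ∀ i0 j0, i0 ∈ b → j0 ∈ b → t0 ∈ M.closure {i0, j0} → y = i0 → False := by
            intro i0 j0 hi0 hj0 ht0cl hyi
            have hzt0 : z ≠ t0 := fun h => ht0b (h ▸ hzb)
            have hv0_q : v0 ∈ M.closure {z, t0} := exch hsimple (hbsE ht0) hz0 hzt0
            have hv0_3 : v0 ∈ M.closure {z, i0, j0} :=
              closure_pair_le (W := {z, i0, j0})
                (M.subset_closure _ (insert_subset hzE (insert_subset (hbE hi0)
                  (singleton_subset_iff.2 (hbE hj0)))) (by simp))
                (M.closure_subset_closure sub23 ht0cl) hv0_q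
            obtain ⟨hxmem2, _⟩ := cover hsimple hbI hxb hyb
              (insert_subset hzb (insert_subset hi0 (singleton_subset_iff.2 hj0)))
              hv0cl hv0nxy hv0_3
            simp only [mem_insert_iff, mem_singleton_iff] at hxmem2
            have hxj : x = j0 := by
              rcases hxmem2 with h | h | h
              exacts [absurd h.symm hzx, absurd (h.trans hyi.symm) hxy, h]
            have ht0xy : t0 ∈ M.closure {x, y} := by
              rw [Set.pair_comm, hyi, hxj]; exact ht0cl
            have ht0uv : t0 ∈ M.closure {u0, v0} := by rw [← hL0]; exact ht0xy
            have ht0np : t0 ∉ ({u0, v0} : Set α) := by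
              simp only [mem_insert_iff, mem_singleton_iff]
              push_neg
              exact ⟨ht0u0, ht0v0⟩
            exact not_mem_closure_of_indep hbsI ht0 (pair_subset hu0 hv0) ht0np ht0uv
          rcases hyij with h | h
          · exact final i j hib hjb htij h
          · exact final j i hjb hib (by rw [Set.pair_comm]; exact htij) h
      have hxc' : x ∈ M.closure {v, u} := by rw [Set.pair_comm v u]; exact hxc
      have hL' : M.closure {x, y} = M.closure {v, u} := by rw [Set.pair_comm v u]; exact hL
      have hqst' : q ∈ M.closure {t, s} := by rw [Set.pair_comm t s]; exact hqst
      have hzst' : z ∈ M.closure {t', s'} := by rw [Set.pair_comm t' s']; exact hzst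
      rcases hu4 with hA | hA | hA | hA <;> rcases hv4 with hB | hB | hB | hB
      · exact huv (hA.trans hB.symm)
      · exact hS1 (pair_eq_of_mem (Or.inl hA) (Or.inr hB) huv)
      · exact mixed u v t t' hu hv huv hunb hvnb htbs ht'bs
          (fun h => hs't' (hB.symm.trans h))
          (fun h => hst (h.trans hA).symm)
          (fun h => hS1 (pair_eq_of_mem (Or.inl hA) (Or.inr h.symm) huv))
          (fun h => hS2 (pair_eq_of_mem (Or.inr h.symm) (Or.inl hB) huv))
          hxc hL hucl hvcl (by rw [hA]; exact hqst) (by rw [hB]; exact hzst)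
      · exact mixed u v t s' hu hv huv hunb hvnb htbs hs'bs
          (fun h => hs't' (h.symm.trans hB))
          (fun h => hst (h.trans hA).symm)
          (fun h => hS1 (pair_eq_of_mem (Or.inl hA) (Or.inr h.symm) huv))
          (fun h => hS2 (pair_eq_of_mem (Or.inl h.symm) (Or.inr hB) huv))
          hxc hL hucl hvcl (by rw [hA]; exact hqst) (by rw [hB]; exact hzst')
      · exact hS1 (pair_eq_of_mem (Or.inr hA) (Or.inl hB) huv)
      · exact huv (hA.trans hB.symm)
      · exact mixed u v s t' hu hv huv hunb hvnb hsbs ht'bs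
          (fun h => hs't' (hB.symm.trans h))
          (fun h => hst (h.trans hA))
          (fun h => hS1 (pair_eq_of_mem (Or.inr hA) (Or.inl h.symm) huv))
          (fun h => hS2 (pair_eq_of_mem (Or.inr h.symm) (Or.inl hB) huv))
          hxc hL hucl hvcl (by rw [hA]; exact hqst') (by rw [hB]; exact hzst)
      · exact mixed u v s s' hu hv huv hunb hvnb hsbs hs'bs
          (fun h => hs't' (h.symm.trans hB))
          (fun h => hst (h.trans hA))
          (fun h => hS1 (pair_eq_of_mem (Or.inr hA) (Or.inl h.symm) huv))
          (fun h => hS2 (pair_eq_of_mem (Or.inl h.symm) (Or.inr hB) huv))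
          hxc hL hucl hvcl (by rw [hA]; exact hqst') (by rw [hB]; exact hzst')
      · exact mixed v u t t' hv hu huv.symm hvnb hunb htbs ht'bs
          (fun h => hs't' (hA.symm.trans h))
          (fun h => hst (h.trans hB).symm)
          (fun h => hS1 (pair_eq_of_mem (Or.inr h.symm) (Or.inl hB) huv))
          (fun h => hS2 (pair_eq_of_mem (Or.inl hA) (Or.inr h.symm) huv))
          hxc' hL' hvcl hucl (by rw [hB]; exact hqst) (by rw [hA]; exact hzst)
      · exact mixed v u s t' hv hu huv.symm hvnb hunb hsbs ht'bs
          (fun h => hs't' (hA.symm.trans h))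
          (fun h => hst (h.trans hB))
          (fun h => hS1 (pair_eq_of_mem (Or.inl h.symm) (Or.inr hB) huv))
          (fun h => hS2 (pair_eq_of_mem (Or.inl hA) (Or.inr h.symm) huv))
          hxc' hL' hvcl hucl (by rw [hB]; exact hqst') (by rw [hA]; exact hzst)
      · exact huv (hA.trans hB.symm)
      · exact hS2 (pair_eq_of_mem (Or.inl hA) (Or.inr hB) huv)
      · exact mixed v u t s' hv hu huv.symm hvnb hunb htbs hs'bs
          (fun h => hs't' (h.symm.trans hA))
          (fun h => hst (h.trans hB).symm)
          (fun h => hS1 (pair_eq_of_mem (Or.inr h.symm) (Or.inl hB) huv))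
          (fun h => hS2 (pair_eq_of_mem (Or.inr hA) (Or.inl h.symm) huv))
          hxc' hL' hvcl hucl (by rw [hB]; exact hqst) (by rw [hA]; exact hzst')
      · exact mixed v u s s' hv hu huv.symm hvnb hunb hsbs hs'bs
          (fun h => hs't' (h.symm.trans hA))
          (fun h => hst (h.trans hB))
          (fun h => hS1 (pair_eq_of_mem (Or.inl h.symm) (Or.inr hB) huv))
          (fun h => hS2 (pair_eq_of_mem (Or.inr hA) (Or.inl h.symm) huv))
          hxc' hL' hvcl hucl (by rw [hB]; exact hqst') (by rw [hA]; exact hzst')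
      · exact hS2 (pair_eq_of_mem (Or.inr hA) (Or.inl hB) huv)
      · exact huv (hA.trans hB.symm)



set_option maxHeartbeats 1000000 in
lemma no_common_line {bs : Set α} (hfin : M.E.Finite) (hsimple : MSimple M)
    (hconn : MConnected M) (hb : IsCremonaBasis M b) (hbs : IsCremonaBasis M bs)
    (hx : x ∈ b \ bs) (hy : y ∈ b \ bs) (hxy : x ≠ y)
    (hzex : ∃ z ∈ b, z ≠ x ∧ z ≠ y)
    (hu : u ∈ bs) (hv : v ∈ bs) (huv : u ≠ v)
    (hxc : x ∈ M.closure {u, v}) (hyc : y ∈ M.closure {u, v}) : False := by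
  have hbI := hb.1.indep
  have hbE : b ⊆ M.E := hbI.subset_ground
  have hxb := hx.1
  have hyb := hy.1
  have hxE := hbE hxb
  have hyE := hbE hyb
  obtain ⟨z0, hz0b, hz0x, hz0y⟩ := hzex
  have hFx : ∀ z ∈ b, z ≠ x → z ≠ y → Fij M x z = ∅ :=
    fun z hz h1 h2 => Fxz_empty hsimple hb hbs hx hy hxy hu hv huv hxc hyc hz h1 h2
  have hFy : ∀ z ∈ b, z ≠ x → z ≠ y → Fij M y z = ∅ :=
    fun z hz h1 h2 => Fxz_empty hsimple hb hbs hy hx hxy.symm hu hv huv hyc hxc hz h2 h1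
  have hxynb : ({x, y} : Set α) ⊆ b := pair_subset hxb hyb
  have hbsplit : ({x, y} : Set α) ∪ (b \ ({x, y} : Set α)) = b := union_diff_cancel hxynb
  have hIb' : M.Indep (({x, y} : Set α) ∪ (b \ ({x, y} : Set α))) := by rw [hbsplit]; exact hbI
  have hdisjV : Disjoint ({x, y} : Set α) (b \ ({x, y} : Set α)) := disjoint_sdiff_right
  have hV2E : (b \ ({x, y} : Set α)) ⊆ M.E := diff_subset.trans hbE
  have hcover : ∀ p ∈ M.E, p ∈ M.closure {x, y} ∨ p ∈ M.closure (b \ ({x, y} : Set α)) := by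
    intro p hpE
    by_cases hpb : p ∈ b
    · by_cases hpxy : p = x ∨ p = y
      · left
        rcases hpxy with rfl | rfl <;>
          exact M.subset_closure _ (pair_subset hxE hyE) (by simp)
      · right
        push_neg at hpxy
        exact M.subset_closure _ hV2E ⟨hpb, by
          simp only [mem_insert_iff, mem_singleton_iff]
          push_neg
          exact hpxy⟩
    · obtain ⟨i, j, hib, hjb, hij, hpF⟩ := cremona_sigma hb ⟨hpE, hpb⟩
      have hpcl : p ∈ M.closure {i, j} := hpF.1
      by_cases hi2 : i = x ∨ i = y
      · by_cases hj2 : j = x ∨ j = y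
        · left
          rw [← pair_eq_of_mem hi2 hj2 hij]; exact hpcl
        · push_neg at hj2
          exfalso
          rcases hi2 with rfl | rfl
          · have : p ∈ (∅ : Set α) := hFx j hjb hj2.1 hj2.2 ▸ hpF
            exact this.elim
          · have : p ∈ (∅ : Set α) := hFy j hjb hj2.1 hj2.2 ▸ hpF
            exact this.elim
      · push_neg at hi2
        by_cases hj2 : j = x ∨ j = y
        · exfalso
          have hpF' : p ∈ Fij M j i := by rw [Fij_comm]; exact hpF
          rcases hj2 with rfl | rfl
          · have : p ∈ (∅ : Set α) := hFx i hib hi2.1 hi2.2 ▸ hpF'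
            exact this.elim
          · have : p ∈ (∅ : Set α) := hFy i hib hi2.1 hi2.2 ▸ hpF'
            exact this.elim
        · push_neg at hj2
          right
          have hiV : i ∈ b \ ({x, y} : Set α) := ⟨hib, by
            simp only [mem_insert_iff, mem_singleton_iff]
            push_neg
            exact hi2⟩
          have hjV : j ∈ b \ ({x, y} : Set α) := ⟨hjb, by
            simp only [mem_insert_iff, mem_singleton_iff]
            push_neg
            exact hj2⟩
          exact M.closure_subset_closure (pair_subset hiV hjV) hpcl
  rcases hconn.2 x hxE z0 (hbE hz0b) with heq | ⟨C, hC, hxC, hz0C⟩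
  · exact hz0x heq.symm
  have hz0cl : z0 ∉ M.closure {x, y} :=
    not_mem_closure_of_indep hbI hz0b hxynb (by
      simp only [mem_insert_iff, mem_singleton_iff]
      push_neg
      exact ⟨hz0x, hz0y⟩)
  have hxcl : x ∈ M.closure {x, y} := M.subset_closure _ (pair_subset hxE hyE) (by simp)
  have hC1 : M.Indep (C ∩ M.closure {x, y}) := by
    apply (hC.2.2 z0 hz0C).subset
    intro p hp
    exact ⟨hp.1, fun h => hz0cl (mem_singleton_iff.1 h ▸ hp.2)⟩
  have hC2ind : M.Indep (C \ M.closure {x, y}) := by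
    apply (hC.2.2 x hxC).subset
    intro p hp
    exact ⟨hp.1, fun h => hp.2 (mem_singleton_iff.1 h ▸ hxcl)⟩
  have hC2sub : C \ M.closure {x, y} ⊆ M.closure (b \ ({x, y} : Set α)) := by
    intro p hp
    rcases hcover p (hC.1 hp.1) with h | h
    · exact absurd h hp.2
    · exact h
  have hCind : M.Indep ((C ∩ M.closure {x, y}) ∪ (C \ M.closure {x, y})) :=
    skew_union hfin hIb' hdisjV hC1 inter_subset_right hC2ind hC2sub
  rw [inter_union_diff] at hCind
  exact hC.2.1 hCind


end CremAux

open CremAux in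
set_option maxHeartbeats 1000000 in
/-- If `b`, `b*` are two different Cremona bases and `x, y ∈ b \ b*`
are distinct with `F_{xy} ≠ ∅`, then `F_{xy}` is a singleton; i.e. the rank-2 flat
`cl{x,y}` has exactly 3 elements. -/
theorem stmt17 (M : Matroid α) (hfin : M.E.Finite) (hsimple : MSimple M)
    (hconn : MConnected M) (d : ℕ) (hd : 2 ≤ d) (hrk : mRank M M.E = d + 1)
    (b bs : Set α) (hb : IsCremonaBasis M b) (hbs : IsCremonaBasis M bs) (hne : b ≠ bs)
    (x y : α) (hx : x ∈ b \ bs) (hy : y ∈ b \ bs) (hxy : x ≠ y)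
    (hFne : (Fij M x y).Nonempty) :
    (∃ e, Fij M x y = {e}) ∧ (M.closure {x, y}).ncard = 3 := by
  classical
  have hbI := hb.1.indep
  have hbE : b ⊆ M.E := hbI.subset_ground
  have hbsI := hbs.1.indep
  have hbsE : bs ⊆ M.E := hbsI.subset_ground
  have hxb := hx.1
  have hxbs := hx.2
  have hyb := hy.1
  have hybs := hy.2
  have hxE := hbE hxb
  have hyE := hbE hyb
  have hxyE : ({x, y} : Set α) ⊆ M.E := pair_subset hxE hyE
  have hIxy : M.Indep {x, y} := hbI.subset (pair_subset hxb hyb)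
  have hub : ∀ n ∈ {n | ∃ I, M.Indep I ∧ I ⊆ M.E ∧ I.ncard = n}, n ≤ b.ncard := by
    rintro n ⟨I, hI, hIE, rfl⟩
    obtain ⟨B, hB, hIB⟩ := hI.exists_isBase_superset
    calc I.ncard ≤ B.ncard := Set.ncard_le_ncard hIB (hfin.subset hB.subset_ground)
      _ = b.ncard := hB.ncard_eq_ncard_of_isBase hb.1
  have hmem : b.ncard ∈ {n | ∃ I, M.Indep I ∧ I ⊆ M.E ∧ I.ncard = n} := ⟨b, hbI, hbE, rfl⟩
  have hbcard : b.ncard = d + 1 := by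
    have : mRank M M.E = b.ncard := IsGreatest.csSup_eq ⟨hmem, hub⟩
    rw [← this, hrk]
  have hzex : ∃ z ∈ b, z ≠ x ∧ z ≠ y := by
    by_contra hcon
    push_neg at hcon
    have hsub : b ⊆ ({x, y} : Set α) := by
      intro w hw
      by_cases h : w = x
      · simp [h]
      · simp [hcon w hw h]
    have hle : b.ncard ≤ ({x, y} : Set α).ncard :=
      Set.ncard_le_ncard hsub ((Set.finite_singleton y).insert x)
    rw [Set.ncard_pair hxy] at hle
    omega
  have hnocl : ∀ u v : α, u ∈ bs → v ∈ bs → u ≠ v → x ∈ M.closure {u, v} →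
      y ∈ M.closure {u, v} → False :=
    fun u v hu hv huv h1 h2 =>
      no_common_line hfin hsimple hconn hb hbs hx hy hxy hzex hu hv huv h1 h2
  obtain ⟨u, v, hu, hv, huv, hxF⟩ := cremona_sigma hbs ⟨hxE, hxbs⟩
  obtain ⟨u', v', hu', hv', hu'v', hyF⟩ := cremona_sigma hbs ⟨hyE, hybs⟩
  have hxcuv : x ∈ M.closure {u, v} := hxF.1
  have hycu'v' : y ∈ M.closure {u', v'} := hyF.1
  have hdiffpair : ∀ p1 p2 w w' : α, p1 ∈ M.closure {x, y} → p2 ∈ M.closure {x, y} →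
      p1 ≠ p2 → w ∈ bs → w' ∈ bs → w ≠ w' → p1 ∈ M.closure {w, w'} →
      p2 ∈ M.closure {w, w'} → False := by
    intro p1 p2 w w' h1 h2 h12 hw hw' hww' hc1 hc2
    have hIww : M.Indep {w, w'} := hbsI.subset (pair_subset hw hw')
    have e1 : M.closure {p1, p2} = M.closure {w, w'} :=
      two_point_closure hsimple hIww hww' hc1 hc2 h12
    have e2 : M.closure {p1, p2} = M.closure {x, y} :=
      two_point_closure hsimple hIxy hxy h1 h2 h12
    have hxm : x ∈ M.closure {w, w'} := by
      rw [← e1, e2]; exact M.subset_closure _ hxyE (by simp)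
    have hym : y ∈ M.closure {w, w'} := by
      rw [← e1, e2]; exact M.subset_closure _ hxyE (by simp)
    exact hnocl w w' hw hw' hww' hxm hym
  have hxcl : x ∈ M.closure {x, y} := M.subset_closure _ hxyE (by simp)
  have hycl : y ∈ M.closure {x, y} := M.subset_closure _ hxyE (by simp)
  have hB0sub : ({u, v, u', v'} : Set α) ⊆ bs :=
    insert_subset hu (insert_subset hv (insert_subset hu' (singleton_subset_iff.2 hv')))
  have hclsub : M.closure {x, y} ⊆ M.closure {u, v, u', v'} :=
    closure_pair_le (W := {u, v, u', v'}) (M.closure_subset_closure sub12of4 hxcuv)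
      (M.closure_subset_closure sub34of4 hycu'v')
  have hFnbs : ∀ g ∈ Fij M x y, g ∉ bs := by
    intro g hg hgbs
    have hgcl : g ∈ M.closure {x, y} := hg.1
    have hgB0cl : g ∈ M.closure {u, v, u', v'} := hclsub hgcl
    by_cases hgB0 : g ∈ ({u, v, u', v'} : Set α)
    · have hpull : ∀ p w w' : α, p ∈ M.closure {x, y} → p ∉ bs → w ∈ bs → w' ∈ bs →
          w ≠ w' → p ∈ M.closure {w, w'} → w ∈ M.closure {x, y} → False := by
        intro p w w' hpcl hpbs hw hw' hww' hpc hwcl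
        have hpw : p ≠ w := fun h => hpbs (h ▸ hw)
        have hw'cl : w' ∈ M.closure {p, w} := by
          apply exch hsimple (hbsE hw) ?_ hpw
          rw [Set.pair_comm w' w]; exact hpc
        have hw'xy : w' ∈ M.closure {x, y} := closure_pair_le hpcl hwcl hw'cl
        exact hdiffpair w w' w w' hwcl hw'xy hww' hw hw' hww'
          (M.subset_closure _ (pair_subset (hbsE hw) (hbsE hw')) (by simp))
          (M.subset_closure _ (pair_subset (hbsE hw) (hbsE hw')) (by simp))
      simp only [mem_insert_iff, mem_singleton_iff] at hgB0
      rcases hgB0 with h | h | h | h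
      · exact hpull x u v hxcl hxbs hu hv huv hxcuv (h ▸ hgcl)
      · exact hpull x v u hxcl hxbs hv hu huv.symm
          (by rw [Set.pair_comm v u]; exact hxcuv) (h ▸ hgcl)
      · exact hpull y u' v' hycl hybs hu' hv' hu'v' hycu'v' (h ▸ hgcl)
      · exact hpull y v' u' hycl hybs hv' hu' hu'v'.symm
          (by rw [Set.pair_comm v' u']; exact hycu'v') (h ▸ hgcl)
    · exact not_mem_closure_of_indep hbsI hgbs hB0sub hgB0 hgB0cl
  obtain ⟨e, he⟩ := hFne
  have hsing : ∀ p ∈ Fij M x y, ∀ q ∈ Fij M x y, p = q := by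
    intro p hp q hq
    by_contra hpq
    have hpcl : p ∈ M.closure {x, y} := hp.1
    have hqcl : q ∈ M.closure {x, y} := hq.1
    have hpE : p ∈ M.E := M.closure_subset_ground _ hpcl
    have hqE : q ∈ M.E := M.closure_subset_ground _ hqcl
    have hpbs : p ∉ bs := hFnbs p hp
    have hqbs : q ∉ bs := hFnbs q hq
    have hpx : p ≠ x := fun h => hp.2 (by simp [h])
    have hpy : p ≠ y := fun h => hp.2 (by simp [h])
    have hqx : q ≠ x := fun h => hq.2 (by simp [h])
    have hqy : q ≠ y := fun h => hq.2 (by simp [h])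
    obtain ⟨s, t, hs, ht, hst, hpF⟩ := cremona_sigma hbs ⟨hpE, hpbs⟩
    obtain ⟨s', t', hs', ht', hs't', hqF⟩ := cremona_sigma hbs ⟨hqE, hqbs⟩
    have hpst : p ∈ M.closure {s, t} := hpF.1
    have hqst : q ∈ M.closure {s', t'} := hqF.1
    have h31 : ({s, t} : Set α) ≠ {u, v} := fun hEq =>
      hdiffpair x p u v hxcl hpcl hpx.symm hu hv huv hxcuv (by rw [← hEq]; exact hpst)
    have h32 : ({s, t} : Set α) ≠ {u', v'} := fun hEq =>
      hdiffpair y p u' v' hycl hpcl hpy.symm hu' hv' hu'v' hycu'v' (by rw [← hEq]; exact hpst)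
    have h41 : ({s', t'} : Set α) ≠ {u, v} := fun hEq =>
      hdiffpair x q u v hxcl hqcl hqx.symm hu hv huv hxcuv (by rw [← hEq]; exact hqst)
    have h42 : ({s', t'} : Set α) ≠ {u', v'} := fun hEq =>
      hdiffpair y q u' v' hycl hqcl hqy.symm hu' hv' hu'v' hycu'v' (by rw [← hEq]; exact hqst)
    obtain ⟨hsmem, htmem⟩ := cover hsimple hbsI hs ht hB0sub hpst hpF.2 (hclsub hpcl)
    obtain ⟨hs'mem, ht'mem⟩ := cover hsimple hbsI hs' ht' hB0sub hqst hqF.2 (hclsub hqcl)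
    have hclyp : M.closure {y, p} = M.closure {x, y} :=
      two_point_closure hsimple hIxy hxy hycl hpcl hpy.symm
    have hBsub2 : ({u', v', s, t} : Set α) ⊆ bs :=
      insert_subset hu' (insert_subset hv' (insert_subset hs (singleton_subset_iff.2 ht)))
    have hxin2 : x ∈ M.closure {u', v', s, t} := by
      have hx_yp : x ∈ M.closure {y, p} := by rw [hclyp]; exact hxcl
      exact closure_pair_le (W := {u', v', s, t})
        (M.closure_subset_closure sub12of4 hycu'v')
        (M.closure_subset_closure sub34of4 hpst) hx_yp
    have hxnuv : x ∉ ({u, v} : Set α) := by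
      simp only [mem_insert_iff, mem_singleton_iff]
      push_neg
      exact ⟨fun h => hxbs (h ▸ hu), fun h => hxbs (h ▸ hv)⟩
    obtain ⟨humem, hvmem⟩ := cover hsimple hbsI hu hv hBsub2 hxcuv hxnuv hxin2
    simp only [mem_insert_iff, mem_singleton_iff] at hsmem htmem hs'mem ht'mem humem hvmem
    have hfinal : ({s, t} : Set α) = {s', t'} :=
      comb huv hst hs't' h31 h32 h41 h42 hsmem htmem hs'mem ht'mem humem hvmem
    exact hdiffpair p q s t hpcl hqcl hpq hs ht hst hpst (by rw [hfinal]; exact hqst)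
  have hFeq : Fij M x y = {e} := by
    ext a
    simp only [mem_singleton_iff]
    exact ⟨fun ha => hsing a ha e he, fun ha => ha ▸ he⟩
  refine ⟨⟨e, hFeq⟩, ?_⟩
  have hclosure_eq : M.closure {x, y} = {x, y, e} := by
    ext a
    constructor
    · intro ha
      by_cases haxy : a ∈ ({x, y} : Set α)
      · simp only [mem_insert_iff, mem_singleton_iff] at haxy ⊢
        tauto
      · have haF : a ∈ Fij M x y := ⟨ha, haxy⟩
        rw [hFeq] at haF
        simp only [mem_singleton_iff] at haF
        simp [haF]
    · intro ha
      simp only [mem_insert_iff, mem_singleton_iff] at ha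
      rcases ha with rfl | rfl | rfl
      · exact M.subset_closure _ hxyE (by simp)
      · exact M.subset_closure _ hxyE (by simp)
      · exact he.1
  rw [hclosure_eq]
  have hex : e ∉ ({x, y} : Set α) := he.2
  have hexx : e ≠ x := fun h => hex (by simp [h])
  have hexy : e ≠ y := fun h => hex (by simp [h])
  have h1 : x ∉ ({y, e} : Set α) := by
    simp only [mem_insert_iff, mem_singleton_iff]
    push_neg
    exact ⟨hxy, hexx.symm⟩
  have h2 : y ∉ ({e} : Set α) := by
    simp only [mem_singleton_iff]
    exact hexy.symm
  rw [Set.ncard_insert_of_notMem h1 ((Set.finite_singleton e).insert y),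
    Set.ncard_insert_of_notMem h2 (Set.finite_singleton e), Set.ncard_singleton]
end

section
/- Let M be the matroid of a finite irreducible Coxeter system (W,S) of rank n, realized by the positive roots Φ+(W,S) ⊂ ℝ^S of the geometric representation. Then for every flat F of M there exist w ∈ W and J ⊆ S such that F = w·Φ+_J (the intersection of w·Φ+ rescaled into Φ+ with the span of {α_s : s ∈ J}); in the special case of type B_n realized by {x_i} ∪ {x_i ± x_j : i < j} ⊂ ℝ^n with n ≥ 3, every connected rank-(n−1) flat has at most (n−1)^2 elements. -/
open Set

variable {α : Type*}

/-- In the `Bₙ` root-system matroid (`n ≥ 3`), every connected flat of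
rank `n - 1` has at most `(n-1)²` elements. -/
theorem stmt18 (n : ℕ) (hn : 3 ≤ n) (M : Matroid (Fin n → ℝ))
    (hE : M.E = BnRoots n)
    (hind : ∀ I, M.Indep I ↔ I ⊆ BnRoots n ∧
      LinearIndependent ℝ (fun v : I => (v : Fin n → ℝ))) :
    ∀ F, M.IsFlat F → MConnected (M.restrict F) → mRank M F = n - 1 →
      F.ncard ≤ (n - 1) ^ 2 := by
  classical
  intro F hF _hconn hrank
  have hFE : F ⊆ BnRoots n := hE ▸ hF.subset_ground
  -- every independent subset of F has at most n elements (bound for sSup)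
  have hdim : Module.finrank ℝ (Fin n → ℝ) = n := Module.finrank_fin_fun ℝ
  have hcard_li : ∀ I : Set (Fin n → ℝ),
      LinearIndependent ℝ (fun v : I => (v : Fin n → ℝ)) → I.ncard ≤ n := by
    intro I hI
    have hfin : I.Finite := hI.setFinite
    have := hfin.fintype
    have h1 : Module.finrank ℝ (Submodule.span ℝ I) = I.toFinset.card :=
      finrank_span_set_eq_card hI
    have h2 : Module.finrank ℝ (Submodule.span ℝ I) ≤ n := by
      have := Submodule.finrank_le (Submodule.span ℝ I)
      rwa [hdim] at this
    rw [Set.ncard_eq_toFinset_card' I]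
    omega
  have hbdd : BddAbove {m | ∃ I, M.Indep I ∧ I ⊆ F ∧ I.ncard = m} := by
    refine ⟨n, ?_⟩
    rintro m ⟨I, hI, -, rfl⟩
    exact hcard_li I ((hind I).1 hI).2
  -- span F has finrank ≤ n - 1
  obtain ⟨b, hbF, hbspan, hbli⟩ := exists_linearIndependent ℝ F
  have hbind : M.Indep b := (hind b).2 ⟨hbF.trans hFE, hbli⟩
  have hble : b.ncard ≤ n - 1 := by
    have : b.ncard ∈ {m | ∃ I, M.Indep I ∧ I ⊆ F ∧ I.ncard = m} := ⟨b, hbind, hbF, rfl⟩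
    have := le_csSup hbdd this
    rwa [show sSup {m | ∃ I, M.Indep I ∧ I ⊆ F ∧ I.ncard = m} = n - 1 from hrank] at this
  have hbfin : b.Finite := hbli.setFinite
  have := hbfin.fintype
  have hspanle : Module.finrank ℝ (Submodule.span ℝ F) ≤ n - 1 := by
    rw [← hbspan]
    calc Module.finrank ℝ (Submodule.span ℝ b) ≤ b.toFinset.card := finrank_span_le_card b
      _ = b.ncard := (Set.ncard_eq_toFinset_card' b).symm
      _ ≤ n - 1 := hble
  have hne : Submodule.span ℝ F ≠ ⊤ := by
    intro h
    rw [h, finrank_top, hdim] at hspanle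
    omega
  -- a nonzero functional vanishing on F
  obtain ⟨φ, hφne, hφbot⟩ :=
    Submodule.exists_dual_map_eq_bot_of_lt_top (lt_top_iff_ne_top.mpr hne)
      inferInstance
  have hker : ∀ v ∈ F, φ v = 0 := by
    intro v hv
    have : φ v ∈ (Submodule.span ℝ F).map φ :=
      ⟨v, Submodule.subset_span hv, rfl⟩
    rwa [hφbot, Submodule.mem_bot] at this
  set u : Fin n → ℝ := fun i => φ (Pi.single i 1) with hu
  obtain ⟨i0, hu0⟩ : ∃ i, u i ≠ 0 := by
    by_contra h
    push_neg at h
    apply hφne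
    refine LinearMap.ext fun x => ?_
    rw [φ.pi_apply_eq_sum_univ x]
    have : ∀ i : Fin n, φ (fun j => if i = j then (1:ℝ) else 0) = 0 := by
      intro i
      have : (fun j => if i = j then (1:ℝ) else 0) = Pi.single i 1 := by
        funext j
        rw [Pi.single_apply]
        simp [eq_comm]
      rw [this]
      exact h i
    simp [this]
  -- the covering function
  set g : Fin n × Fin n → (Fin n → ℝ) := fun q =>
    if q.1 = q.2 then
      (if u q.1 = 0 then Pi.single q.1 1
       else if u i0 + u q.1 = 0 then Pi.single i0 1 + Pi.single q.1 1
       else if i0 < q.1 then Pi.single i0 1 - Pi.single q.1 1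
       else Pi.single q.1 1 - Pi.single i0 1)
    else if q.1 < q.2 then Pi.single q.1 1 + Pi.single q.2 1
    else Pi.single q.2 1 - Pi.single q.1 1 with hg
  set K : Finset (Fin n × Fin n) :=
    (Finset.univ.erase i0) ×ˢ (Finset.univ.erase i0) with hK
  have hcover : F ⊆ g '' (K : Set (Fin n × Fin n)) := by
    intro v hv
    have hv0 : φ v = 0 := hker v hv
    have hmemK : ∀ j k : Fin n, j ≠ i0 → k ≠ i0 → (j, k) ∈ (K : Set (Fin n × Fin n)) := by
      intro j k hj hk
      simp [hK, hj, hk]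
    rcases hFE hv with ⟨i, rfl⟩ | ⟨i, j, hij, hsum | hdiff⟩
    · -- v = single i
      have hui : u i = 0 := hv0
      have hii0 : i ≠ i0 := fun h => hu0 (h ▸ hui)
      exact ⟨(i, i), hmemK i i hii0 hii0, by simp [hg, hui]⟩
    · -- v = single i + single j
      subst hsum
      have hval : u i + u j = 0 := by
        have := hv0; rw [map_add] at this; exact this
      rcases eq_or_ne i i0 with rfl | hi
      · have hj : j ≠ i := hij.ne'
        have huj : u j ≠ 0 := by
          intro h; apply hu0; rw [h] at hval; linarith
        refine ⟨(j, j), hmemK j j hj hj, ?_⟩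
        simp [hg, huj, hval]
      · rcases eq_or_ne j i0 with rfl | hj
        · have hui : u i ≠ 0 := by
            intro h; apply hu0; rw [h] at hval; linarith
          have hval' : u j + u i = 0 := by linarith
          refine ⟨(i, i), hmemK i i hi hi, ?_⟩
          simp only [hg, if_pos rfl, if_neg hui, if_pos hval']
          abel
        · refine ⟨(i, j), hmemK i j hi hj, ?_⟩
          simp [hg, hij.ne, hij]
    · -- v = single i - single j
      subst hdiff
      have hval : u i - u j = 0 := by
        have := hv0; rw [map_sub] at this; exact this
      rcases eq_or_ne i i0 with rfl | hi
      · have hj : j ≠ i := hij.ne'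
        have huj : u j ≠ 0 := by
          intro h; apply hu0; rw [h] at hval; linarith
        have hsumne : ¬ (u i + u j = 0) := by
          intro h; apply hu0; linarith
        refine ⟨(j, j), hmemK j j hj hj, ?_⟩
        simp [hg, huj, hsumne, hij]
      · rcases eq_or_ne j i0 with rfl | hj
        · have hui : u i ≠ 0 := by
            intro h; apply hu0; rw [h] at hval; linarith
          have hsumne : ¬ (u j + u i = 0) := by
            intro h; apply hu0; linarith
          have hnlt : ¬ (j < i) := not_lt.mpr hij.le
          refine ⟨(i, i), hmemK i i hi hi, ?_⟩
          simp [hg, hui, hsumne, hnlt]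
        · refine ⟨(j, i), hmemK j i hj hi, ?_⟩
          simp [hg, hij.ne', not_lt.mpr hij.le]
  -- conclude by cardinality
  calc F.ncard ≤ (g '' (K : Set (Fin n × Fin n))).ncard :=
        Set.ncard_le_ncard hcover ((K : Set (Fin n × Fin n)).toFinite.image g)
    _ ≤ (K : Set (Fin n × Fin n)).ncard := Set.ncard_image_le (K : Set (Fin n × Fin n)).toFinite
    _ = K.card := Set.ncard_coe_finset K
    _ = (n - 1) ^ 2 := by
        rw [hK, Finset.card_product, Finset.card_erase_of_mem (Finset.mem_univ i0),
          Finset.card_univ, Fintype.card_fin, sq]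
end
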